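/- arXiv:1305.3961 — 3 statements merged into one kernel-verified Lean document; each statement's English description precedes it below -/
import Mathlib

section
/- Let M ≥ 1 be an integer and let k ∈ 𝔏_M. Then the image of the set {p ∈ S_M : κ(p) = k} under the branch count map β is exactly the set of integer vectors b = (b_0, …, b_M) satisfying min{𝟙, k̃} ≤ b ≤ min{k, k̃} entrywise; equivalently, this image is the Cartesian product V_0 × V_1 × ⋯ × V_M, where V_n = {min{1, k̃_n}, min{1, k̃_n} + 1, …, min{k_n, k̃_n}}. -/
/-- Entry `i` of an integer sequence given as a list (default `0` out of range). -/
def ent (p : List ℤ) (i : ℕ) : ℤ := p.getD i 0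

/-- Excursions of `p` to depth `n`: maximal blocks `[a, c]` of consecutive
indices on which `p` is at least `n`. -/
def excSet (p : List ℤ) (n : ℤ) : Set (ℕ × ℕ) :=
  {ac | ac.1 ≤ ac.2 ∧ ac.2 ≤ p.length - 1 ∧
    (∀ i, ac.1 ≤ i → i ≤ ac.2 → n ≤ ent p i) ∧
    (ac.1 = 0 ∨ ent p (ac.1 - 1) < n) ∧
    (ac.2 = p.length - 1 ∨ ent p (ac.2 + 1) < n)}

/-- The left shift `(k_1, ..., k_M, 0)` of a vector `(k_0, ..., k_M)`. -/
def ktilde (M : ℕ) (k : Fin (M + 1) → ℕ) : Fin (M + 1) → ℕ :=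
  fun n => if h : (n : ℕ) + 1 < M + 1 then k ⟨(n : ℕ) + 1, h⟩ else 0

/-- A reflection scattering sequence for an `M`-layer medium: a sequence
`(p_0, ..., p_L)` with `L ≥ 2`, `p_0 = p_L = -1`, `p_i ∈ {0, ..., M}` for
`1 ≤ i ≤ L - 1`, and `|p_{i+1} - p_i| = 1` for all `0 ≤ i ≤ L - 1`. -/
def IsScat (M : ℕ) (p : List ℤ) : Prop :=
  3 ≤ p.length ∧ ent p 0 = -1 ∧ ent p (p.length - 1) = -1 ∧
  (∀ i, 1 ≤ i → i ≤ p.length - 2 → 0 ≤ ent p i ∧ ent p i ≤ (M : ℤ)) ∧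
  (∀ i, i < p.length - 1 → |ent p (i + 1) - ent p i| = 1)

/-- The transit count vector `κ(p)`: `k_n` is the number of excursions of `p`
to depth `n`. -/
noncomputable def kappa (M : ℕ) (p : List ℤ) : Fin (M + 1) → ℕ :=
  fun n => (excSet p ((n : ℕ) : ℤ)).ncard

/-- The branch count vector `β(p)`: `b_n` is the number of excursions of `p`
to depth `n` that contain some index `i` with `p_i ≥ n + 1`. -/
noncomputable def beta (M : ℕ) (p : List ℤ) : Fin (M + 1) → ℕ :=
  fun n => {ac ∈ excSet p ((n : ℕ) : ℤ) |
    ∃ i, ac.1 ≤ i ∧ i ≤ ac.2 ∧ ((n : ℕ) : ℤ) + 1 ≤ ent p i}.ncard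



lemma ent_cons_succ (x : ℤ) (q : List ℤ) (i : ℕ) : ent (x :: q) (i+1) = ent q i := rfl
lemma ent_cons_zero (x : ℤ) (q : List ℤ) : ent (x :: q) 0 = x := rfl
lemma ent_out (p : List ℤ) (j : ℕ) (h : p.length ≤ j) : ent p j = 0 :=
  List.getD_eq_default _ _ h

/-- count of adjacent pairs matching `P` -/
def c2 (P : ℤ → ℤ → Bool) : List ℤ → ℕ
  | x :: y :: t => (if P x y then 1 else 0) + c2 P (y :: t)
  | _ => 0

/-- count of adjacent triples matching `P` -/
def c3 (P : ℤ → ℤ → ℤ → Bool) : List ℤ → ℕ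
  | x :: y :: z :: t => (if P x y z then 1 else 0) + c3 P (y :: z :: t)
  | _ => 0

def pl (n x y : ℤ) : Bool := decide (x < n ∧ n ≤ y)
def ql (n x y z : ℤ) : Bool := decide (x < n ∧ n ≤ y ∧ n + 1 ≤ z)

lemma c2_card (P : ℤ → ℤ → Bool) (p : List ℤ) :
    ((Finset.range (p.length - 1)).filter (fun i => P (ent p i) (ent p (i+1)) = true)).card
      = c2 P p := by
  induction p with
  | nil => simp [c2]
  | cons x q ih =>
    cases q with
    | nil => simp [c2]
    | cons y t =>
      rw [Finset.card_filter]
      rw [show (x :: y :: t).length - 1 = t.length + 1 from rfl]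
      rw [Finset.sum_range_succ']
      have h1 : ∀ i, ent (x :: y :: t) (i+1) = ent (y :: t) i := fun i => rfl
      have h2 : ∀ i, ent (x :: y :: t) (i+1+1) = ent (y :: t) (i+1) := fun i => rfl
      simp only [h1, h2, ent_cons_zero]
      rw [← Finset.card_filter]
      rw [show t.length = (y :: t).length - 1 from rfl, ih]
      show c2 P (y :: t) + _ = c2 P (x :: y :: t)
      rw [show c2 P (x :: y :: t) = (if P x y then 1 else 0) + c2 P (y :: t) from rfl]
      simp [Nat.add_comm]

lemma c3_card (P : ℤ → ℤ → ℤ → Bool) (p : List ℤ) :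
    ((Finset.range (p.length - 2)).filter
      (fun i => P (ent p i) (ent p (i+1)) (ent p (i+2)) = true)).card = c3 P p := by
  induction p with
  | nil => simp [c3]
  | cons x q ih =>
    cases q with
    | nil => simp [c3]
    | cons y t =>
      cases t with
      | nil => simp [c3]
      | cons z s =>
        rw [Finset.card_filter]
        rw [show (x :: y :: z :: s).length - 2 = s.length + 1 from rfl]
        rw [Finset.sum_range_succ']
        have h1 : ∀ i, ent (x :: y :: z :: s) (i+1) = ent (y :: z :: s) i := fun i => rfl
        simp only [h1, ent_cons_zero]
        rw [← Finset.card_filter]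
        rw [show s.length = (y :: z :: s).length - 2 from rfl, ih]
        show c3 P (y :: z :: s) + _ = c3 P (x :: y :: z :: s)
        rw [show c3 P (x :: y :: z :: s)
            = (if P x y z then 1 else 0) + c3 P (y :: z :: s) from rfl]
        have h3 : ent (y :: z :: s) 1 = z := rfl
        simp [h3, Nat.add_comm]
lemma c2_append_cons (P : ℤ → ℤ → Bool) (s t : List ℤ) (x : ℤ) :
    c2 P (s ++ x :: t) = c2 P (s ++ [x]) + c2 P (x :: t) := by
  induction s with
  | nil => simp [c2]
  | cons u s' ih =>
    cases s' with
    | nil => simp [c2]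
    | cons w s'' =>
      show c2 P (u :: w :: (s'' ++ x :: t)) = _
      rw [show c2 P (u :: w :: (s'' ++ x :: t))
          = (if P u w then 1 else 0) + c2 P (w :: (s'' ++ x :: t)) from rfl]
      rw [show (w :: (s'' ++ x :: t)) = (w :: s'') ++ x :: t from rfl, ih]
      show _ = c2 P (u :: w :: (s'' ++ [x])) + _
      rw [show c2 P (u :: w :: (s'' ++ [x]))
          = (if P u w then 1 else 0) + c2 P (w :: (s'' ++ [x])) from rfl]
      simp only [List.cons_append]; omega

lemma c3_append_cons (P : ℤ → ℤ → ℤ → Bool) (s t : List ℤ) (x y : ℤ) :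
    c3 P (s ++ x :: y :: t) = c3 P (s ++ [x, y]) + c3 P (x :: y :: t) := by
  induction s with
  | nil => simp [c3]
  | cons u s' ih =>
    cases s' with
    | nil =>
      show c3 P (u :: x :: y :: t) = c3 P (u :: x :: [y]) + c3 P (x :: y :: t)
      rw [show c3 P (u :: x :: y :: t)
          = (if P u x y then 1 else 0) + c3 P (x :: y :: t) from rfl]
      simp [c3]
    | cons w s'' =>
      cases s'' with
      | nil =>
        show c3 P (u :: w :: (x :: y :: t)) = _
        rw [show c3 P (u :: w :: x :: y :: t)
            = (if P u w x then 1 else 0) + c3 P (w :: x :: y :: t) from rfl]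
        rw [show c3 P (w :: x :: y :: t)
            = (if P w x y then 1 else 0) + c3 P (x :: y :: t) from rfl]
        simp only [c3, List.cons_append, List.nil_append]
        omega
      | cons r s''' =>
        show c3 P (u :: w :: r :: (s''' ++ x :: y :: t)) = _
        rw [show c3 P (u :: w :: r :: (s''' ++ x :: y :: t))
            = (if P u w r then 1 else 0) + c3 P (w :: r :: (s''' ++ x :: y :: t)) from rfl]
        rw [show (w :: r :: (s''' ++ x :: y :: t)) = (w :: r :: s''') ++ x :: y :: t from rfl,
          ih]
        show _ = c3 P (u :: w :: r :: (s''' ++ [x, y])) + _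
        rw [show c3 P (u :: w :: r :: (s''' ++ [x, y]))
            = (if P u w r then 1 else 0) + c3 P (w :: r :: (s''' ++ [x, y])) from rfl]
        simp only [List.cons_append]; omega

lemma c2_app_v (m v : ℤ) (e : List ℤ) (he : ∀ x ∈ e, v + 1 ≤ x) :
    c2 (pl m) (e ++ [v]) = c2 (pl m) e := by
  induction e with
  | nil => simp [c2]
  | cons x e' ih =>
    cases e' with
    | nil =>
      have hx : v + 1 ≤ x := he x (by simp)
      simp only [List.cons_append, List.nil_append, c2, pl]
      have : ¬ (x < m ∧ m ≤ v) := by omega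
      simp [this]
    | cons y t =>
      show c2 (pl m) (x :: y :: (t ++ [v])) = _
      rw [show c2 (pl m) (x :: y :: (t ++ [v]))
          = (if pl m x y then 1 else 0) + c2 (pl m) (y :: (t ++ [v])) from rfl]
      rw [show (y :: (t ++ [v])) = (y :: t) ++ [v] from rfl]
      rw [ih (fun z hz => he z (List.mem_cons_of_mem _ hz))]
      rfl

lemma c3_app_v (m v : ℤ) (e : List ℤ) (he : ∀ x ∈ e, v + 1 ≤ x) :
    c3 (ql m) (e ++ [v]) = c3 (ql m) e := by
  induction e with
  | nil => simp [c3]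
  | cons x e' ih =>
    cases e' with
    | nil => simp [c3]
    | cons y t =>
      cases t with
      | nil =>
        have hx : v + 1 ≤ x := he x (by simp)
        simp only [List.cons_append, List.nil_append, c3, ql]
        have : ¬ (x < m ∧ m ≤ y ∧ m + 1 ≤ v) := by omega
        simp [this]; omega
      | cons z s =>
        show c3 (ql m) (x :: y :: z :: (s ++ [v])) = _
        rw [show c3 (ql m) (x :: y :: z :: (s ++ [v]))
            = (if ql m x y z then 1 else 0) + c3 (ql m) (y :: z :: (s ++ [v])) from rfl]
        rw [show (y :: z :: (s ++ [v])) = (y :: z :: s) ++ [v] from rfl]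
        rw [ih (fun u hu => he u (List.mem_cons_of_mem _ hu))]
        rfl

lemma c3_app_v2 (m v : ℤ) (e : List ℤ) (he : ∀ x ∈ e, v + 1 ≤ x) :
    c3 (ql m) (e ++ [v, v + 1]) = c3 (ql m) e := by
  induction e with
  | nil => simp [c3]
  | cons x e' ih =>
    cases e' with
    | nil =>
      have hx : v + 1 ≤ x := he x (by simp)
      simp only [List.cons_append, List.nil_append, c3, ql]
      have : ¬ (x < m ∧ m ≤ v ∧ m + 1 ≤ v + 1) := by omega
      simp [this]
      omega
    | cons y t =>
      cases t with
      | nil =>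
        have hx : v + 1 ≤ x := he x (by simp)
        have hy : v + 1 ≤ y := he y (by simp)
        simp only [List.cons_append, List.nil_append, c3, ql]
        have h1 : ¬ (x < m ∧ m ≤ y ∧ m + 1 ≤ v) := by omega
        have h2 : ¬ (y < m ∧ m ≤ v ∧ m + 1 ≤ v + 1) := by omega
        simp [h1, h2]
        omega
      | cons z s =>
        show c3 (ql m) (x :: y :: z :: (s ++ [v, v+1])) = _
        rw [show c3 (ql m) (x :: y :: z :: (s ++ [v, v+1]))
            = (if ql m x y z then 1 else 0) + c3 (ql m) (y :: z :: (s ++ [v, v+1])) from rfl]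
        rw [show (y :: z :: (s ++ [v, v+1])) = (y :: z :: s) ++ [v, v+1] from rfl]
        rw [ih (fun u hu => he u (List.mem_cons_of_mem _ hu))]
        rfl

lemma c2_sand (m v : ℤ) (e : List ℤ) (hh : e.head? = some (v + 1))
    (he : ∀ x ∈ e, v + 1 ≤ x) :
    c2 (pl m) (v :: e ++ [v]) = c2 (pl m) e + (if m = v + 1 then 1 else 0) := by
  cases e with
  | nil => simp at hh
  | cons x t =>
    have hx : x = v + 1 := by simpa using hh
    subst hx
    rw [show (v :: (v+1) :: t ++ [v]) = v :: (((v+1) :: t) ++ [v]) from rfl]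
    rw [show c2 (pl m) (v :: (((v+1) :: t) ++ [v]))
        = (if pl m v (v+1) then 1 else 0) + c2 (pl m) (((v+1) :: t) ++ [v]) from rfl]
    rw [c2_app_v m v _ he]
    have : pl m v (v+1) = decide (m = v + 1) := by
      simp [pl]; by_cases h : m = v + 1 <;> simp [h] <;> omega
    rw [this]
    simp only [decide_eq_true_eq]
    omega

lemma c3_sand (m v : ℤ) (e : List ℤ) (hh : e.head? = some (v + 1))
    (he : ∀ x ∈ e, v + 1 ≤ x) :
    c3 (ql m) (v :: e ++ [v])
      = c3 (ql m) e + (if m = v + 1 ∧ v + 2 ≤ e.getD 1 v then 1 else 0) := by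
  cases e with
  | nil => simp at hh
  | cons x t =>
    have hx : x = v + 1 := by simpa using hh
    subst hx
    cases t with
    | nil =>
      simp only [c3, ql, List.cons_append, List.nil_append, List.getD]
      have h1 : ¬ (v < m ∧ m ≤ v + 1 ∧ m + 1 ≤ v) := by omega
      have h2 : ¬ (m = v + 1 ∧ v + 2 ≤ v) := by omega
      simp [h1, h2]; omega
    | cons y s =>
      rw [show (v :: ((v+1) :: y :: s) ++ [v]) = v :: (v+1) :: y :: (s ++ [v]) by simp]
      rw [show c3 (ql m) (v :: (v+1) :: y :: (s ++ [v]))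
          = (if ql m v (v+1) y then 1 else 0) + c3 (ql m) ((v+1) :: y :: (s ++ [v])) from rfl]
      rw [show ((v+1) :: y :: (s ++ [v])) = ((v+1) :: y :: s) ++ [v] from rfl]
      rw [c3_app_v m v _ he]
      have : ql m v (v+1) y = decide (m = v + 1 ∧ v + 2 ≤ y) := by
        simp only [ql, decide_eq_decide]; omega
      rw [this]
      have hg : ((v+1) :: y :: s).getD 1 v = y := rfl
      rw [hg]
      simp only [decide_eq_true_eq]
      omega

lemma c3_sand2 (m v : ℤ) (e : List ℤ) (hh : e.head? = some (v + 1))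
    (he : ∀ x ∈ e, v + 1 ≤ x) :
    c3 (ql m) (v :: e ++ [v, v + 1])
      = c3 (ql m) e + (if m = v + 1 ∧ v + 2 ≤ e.getD 1 v then 1 else 0) := by
  cases e with
  | nil => simp at hh
  | cons x t =>
    have hx : x = v + 1 := by simpa using hh
    subst hx
    cases t with
    | nil =>
      simp only [c3, ql, List.cons_append, List.nil_append, List.getD]
      have h1 : ¬ (v < m ∧ m ≤ v + 1 ∧ m + 1 ≤ v) := by omega
      have h2 : ¬ (v + 1 < m ∧ m ≤ v ∧ m + 1 ≤ v + 1) := by omega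
      have h3 : ¬ (m = v + 1 ∧ v + 2 ≤ v) := by omega
      simp [h1, h2, h3]
      omega
    | cons y s =>
      rw [show (v :: ((v+1) :: y :: s) ++ [v, v+1]) = v :: (v+1) :: y :: (s ++ [v, v+1]) by simp]
      rw [show c3 (ql m) (v :: (v+1) :: y :: (s ++ [v, v+1]))
          = (if ql m v (v+1) y then 1 else 0) + c3 (ql m) ((v+1) :: y :: (s ++ [v, v+1])) from rfl]
      rw [show ((v+1) :: y :: (s ++ [v, v+1])) = ((v+1) :: y :: s) ++ [v, v+1] from rfl]
      rw [c3_app_v2 m v _ he]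
      have : ql m v (v+1) y = decide (m = v + 1 ∧ v + 2 ≤ y) := by
        simp only [ql, decide_eq_decide]; omega
      rw [this]
      have hg : ((v+1) :: y :: s).getD 1 v = y := rfl
      rw [hg]
      simp only [decide_eq_true_eq]
      omega

/-- An excursion at depth `v+1`: children glued with separator `v`. -/
def glue (v : ℤ) (cs : List (List ℤ)) : List ℤ := v :: (cs.map (· ++ [v])).flatten

/-- hypotheses on a list of children at depth `v+1` -/
def Kid (v : ℤ) (e : List ℤ) : Prop :=
  e.head? = some (v + 1) ∧ (∀ x ∈ e, v + 1 ≤ x)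

lemma glue_cons (v : ℤ) (e : List ℤ) (cs : List (List ℤ)) :
    glue v (e :: cs) = (v :: e) ++ glue v cs := by
  simp [glue]

lemma glue_head (v : ℤ) (cs : List (List ℤ)) : (glue v cs).head? = some v := rfl

lemma glue_c2 (m v : ℤ) (cs : List (List ℤ)) (h : ∀ e ∈ cs, Kid v e) :
    c2 (pl m) (glue v cs)
      = (cs.map (c2 (pl m))).sum + (if m = v + 1 then cs.length else 0) := by
  induction cs with
  | nil => simp [glue, c2]
  | cons e cs ih =>
    have hke := h e (by simp)
    rw [glue_cons]
    rw [show glue v cs = v :: (cs.map (· ++ [v])).flatten from rfl]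
    rw [c2_append_cons]
    rw [show (v :: e) ++ [v] = v :: e ++ [v] from rfl]
    rw [c2_sand m v e hke.1 hke.2]
    rw [show (v :: (cs.map (· ++ [v])).flatten) = glue v cs from rfl]
    rw [ih (fun e' he' => h e' (by simp [he']))]
    simp only [List.map_cons, List.sum_cons, List.length_cons]
    by_cases hm : m = v + 1 <;> simp [hm] <;> omega

lemma glue_c3 (m v : ℤ) (cs : List (List ℤ)) (h : ∀ e ∈ cs, Kid v e) :
    c3 (ql m) (glue v cs)
      = (cs.map (c3 (ql m))).sum
        + (if m = v + 1 then cs.countP (fun e => decide (v + 2 ≤ e.getD 1 v)) else 0) := by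
  induction cs with
  | nil => simp [glue, c3]
  | cons e cs ih =>
    have hke := h e (by simp)
    rw [glue_cons]
    cases cs with
    | nil =>
      rw [show glue v [] = [v] from rfl]
      rw [show (v :: e) ++ [v] = v :: e ++ [v] from rfl]
      rw [c3_sand m v e hke.1 hke.2]
      simp only [List.map_cons, List.map_nil, List.sum_cons, List.sum_nil, List.countP_cons,
        List.countP_nil]
      by_cases hm : m = v + 1 <;>
        by_cases hb : v + 2 ≤ e.getD 1 v <;> simp [hm, hb] <;> omega
    | cons e' cs' =>
      have hke' := h e' (by simp)
      obtain ⟨t, ht⟩ : ∃ t, e' = (v + 1) :: t := by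
        cases e' with
        | nil => exact absurd hke'.1 (by simp)
        | cons a b =>
          have ha : a = v + 1 := by simpa using hke'.1
          exact ⟨b, by rw [ha]⟩
      have hglue : glue v (e' :: cs') = v :: (v + 1) :: (t ++ [v] ++ (cs'.map (· ++ [v])).flatten) := by
        rw [ht]; simp [glue]
      rw [hglue]
      rw [show (v :: e) ++ v :: (v+1) :: (t ++ [v] ++ (cs'.map (· ++ [v])).flatten)
          = (v :: e) ++ v :: (v+1) :: (t ++ [v] ++ (cs'.map (· ++ [v])).flatten) from rfl]
      rw [c3_append_cons (ql m) (v :: e) _ v (v+1)]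
      rw [show (v :: e) ++ [v, v+1] = v :: e ++ [v, v+1] from rfl]
      rw [c3_sand2 m v e hke.1 hke.2]
      rw [show (v :: (v+1) :: (t ++ [v] ++ (cs'.map (· ++ [v])).flatten)) = glue v (e' :: cs') by
        rw [hglue]]
      rw [ih (fun e'' he'' => h e'' (by simp [he'']))]
      simp only [List.map_cons, List.sum_cons, List.countP_cons]
      by_cases hm : m = v + 1 <;>
        by_cases hb : v + 2 ≤ e.getD 1 v <;> simp [hm, hb] <;> omega

def stp (a b : ℤ) : Prop := |b - a| = 1

lemma glue_ne (v : ℤ) (cs : List (List ℤ)) : glue v cs ≠ [] := by simp [glue]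

lemma glue_getLast (v : ℤ) (cs : List (List ℤ)) : (glue v cs).getLast? = some v := by
  induction cs with
  | nil => rfl
  | cons e cs ih =>
    rw [glue_cons, List.getLast?_append, ih]
    rfl

lemma glue_mem (v hi : ℤ) (cs : List (List ℤ)) (hv : v ≤ hi)
    (h : ∀ e ∈ cs, ∀ x ∈ e, v ≤ x ∧ x ≤ hi) : ∀ x ∈ glue v cs, v ≤ x ∧ x ≤ hi := by
  intro x hx
  simp only [glue, List.mem_cons, List.mem_flatten, List.mem_map] at hx
  rcases hx with rfl | ⟨l, ⟨e, he, rfl⟩, hxl⟩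
  · exact ⟨le_refl _, hv⟩
  · rcases List.mem_append.mp hxl with h1 | h1
    · exact h e he x h1
    · simp at h1; subst h1; exact ⟨le_refl _, hv⟩

lemma glue_chain (v : ℤ) (cs : List (List ℤ))
    (h : ∀ e ∈ cs, e.head? = some (v+1) ∧ e.getLast? = some (v+1) ∧ List.Chain' stp e) :
    List.Chain' stp (glue v cs) := by
  induction cs with
  | nil => simp [glue]; exact List.isChain_singleton _
  | cons e cs ih =>
    obtain ⟨hh, hl, hc⟩ := h e (by simp)
    rw [glue_cons]
    apply List.isChain_append.mpr
    refine ⟨?_, ih (fun e' he' => h e' (by simp [he'])), ?_⟩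
    · apply List.isChain_cons.mpr
      refine ⟨fun y hy => ?_, hc⟩
      rw [hh] at hy; simp at hy; subst hy
      show |v + 1 - v| = 1; simp
    · intro x hx y hy
      have hgl : (v :: e).getLast? = some (v + 1) := by
        rw [List.getLast?_cons, hl]; rfl
      rw [hgl] at hx; simp at hx; subst hx
      rw [glue_head] at hy; simp at hy; subst hy
      show |v - (v+1)| = 1
      rw [show v - (v+1) = -1 by ring]; simp

lemma glue_getD1 (v w d : ℤ) (e : List ℤ) (cs : List (List ℤ)) (hh : e.head? = some w) :
    (glue v (e :: cs)).getD 1 d = w := by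
  cases e with
  | nil => simp at hh
  | cons a b =>
    have : a = w := by simpa using hh
    subst this
    rfl

section ScatLemmas

variable {M : ℕ} {p : List ℤ}

lemma scat_ent_le (hp : IsScat M p) (j : ℕ) : ent p j ≤ (M : ℤ) := by
  obtain ⟨hL, h0, hl, hmid, _⟩ := hp
  by_cases hj : p.length ≤ j
  · rw [ent_out p j hj]; positivity
  · push_neg at hj
    rcases Nat.eq_zero_or_pos j with rfl | hj1
    · rw [h0]; omega
    · by_cases hj2 : j = p.length - 1
      · rw [hj2, hl]; omega
      · exact (hmid j hj1 (by omega)).2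

lemma scat_interior (hp : IsScat M p) (j : ℕ) (h : 1 ≤ ent p j) :
    1 ≤ j ∧ j ≤ p.length - 2 := by
  obtain ⟨hL, h0, hl, hmid, _⟩ := hp
  by_cases hj : p.length ≤ j
  · rw [ent_out p j hj] at h; omega
  · push_neg at hj
    rcases Nat.eq_zero_or_pos j with rfl | hj1
    · rw [h0] at h; omega
    · by_cases hj2 : j = p.length - 1
      · rw [hj2, hl] at h; omega
      · exact ⟨hj1, by omega⟩

/-- existence of a maximal block starting right after an up-crossing -/
lemma exists_exc (hp : IsScat M p) {n : ℤ} (hn : 0 ≤ n) {i : ℕ}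
    (hi : i < p.length - 1) (h2 : n ≤ ent p (i+1)) :
    ∃ c, i + 1 ≤ c ∧ c ≤ p.length - 1 ∧
      (∀ t, i + 1 ≤ t → t ≤ c → n ≤ ent p t) ∧
      (c = p.length - 1 ∨ ent p (c+1) < n) := by
  obtain ⟨hL, h0, hl, hmid, hstep⟩ := hp
  have hex : ∃ j, i + 1 ≤ j ∧ (j = p.length - 1 ∨ ent p (j+1) < n) :=
    ⟨p.length - 1, by omega, Or.inl rfl⟩
  classical
  set c := Nat.find hex with hc
  obtain ⟨hc1, hc2⟩ := Nat.find_spec hex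
  have hcle : c ≤ p.length - 1 := Nat.find_min' hex ⟨by omega, Or.inl rfl⟩
  have key : ∀ d, i + 1 + d ≤ c → n ≤ ent p (i + 1 + d) := by
    intro d
    induction d with
    | zero => intro _; simpa using h2
    | succ d ih =>
      intro hdc
      have hlt : i + 1 + d < c := by omega
      have hnot := Nat.find_min hex hlt
      push_neg at hnot
      have h3 := (hnot (by omega)).2
      have hidx : i + 1 + (d + 1) = (i + 1 + d) + 1 := by omega
      rw [hidx]
      exact h3
  have hall : ∀ t, i + 1 ≤ t → t ≤ c → n ≤ ent p t := by
    intro t h1t h2t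
    have := key (t - (i+1)) (by omega)
    rwa [show i + 1 + (t - (i+1)) = t by omega] at this
  exact ⟨c, hc1, hcle, hall, hc2⟩

end ScatLemmas

section CardLemmas

variable {M : ℕ} {p : List ℤ}

lemma exc_a_pos (hp : IsScat M p) {n : ℤ} (hn : 0 ≤ n) :
    ∀ ac ∈ excSet p n, 1 ≤ ac.1 := by
  rintro ⟨a, c⟩ ⟨hac, hcL, hall, hleft, hright⟩
  by_contra h
  push_neg at h
  have h0 : a = 0 := by omega
  have := hall 0 (by omega) (by omega)
  rw [hp.2.1] at this
  omega

lemma step_bounds {x y : ℤ} (h : |y - x| = 1) : y = x + 1 ∨ y = x - 1 := by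
  rcases (abs_eq (by norm_num : (0:ℤ) ≤ 1)).mp h with h' | h'
  · left; omega
  · right; omega

lemma exc_injOn (hp : IsScat M p) {n : ℤ} (hn : 0 ≤ n) :
    Set.InjOn (fun ac : ℕ × ℕ => ac.1 - 1) (excSet p n) := by
  have key : ∀ a (c c' : ℕ), (a, c) ∈ excSet p n → (a, c') ∈ excSet p n → c < c' → False := by
    intro a c c' hm hm' hlt
    obtain ⟨hac, hcL, hall, hl4, hright⟩ := hm
    obtain ⟨hac', hcL', hall', hl4', hr'⟩ := hm'
    dsimp only at hac hcL hall hright hac' hcL' hall'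
    rcases hright with h | h
    · omega
    · have := hall' (c+1) (by omega) (by omega)
      omega
  rintro ⟨a, c⟩ hmem ⟨a', c'⟩ hmem' h
  have h1 := exc_a_pos hp hn _ hmem
  have h2 := exc_a_pos hp hn _ hmem'
  simp only at h h1 h2
  have haa : a = a' := by omega
  subst haa
  rcases Nat.lt_trichotomy c c' with hcc | hcc | hcc
  · exact absurd (key a c c' hmem hmem' hcc) (by simp)
  · rw [hcc]
  · exact absurd (key a c' c hmem' hmem hcc) (by simp)

lemma excSet_card (hp : IsScat M p) {n : ℤ} (hn : 0 ≤ n) :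
    (excSet p n).ncard = ((Finset.range (p.length - 1)).filter
      (fun i => ent p i < n ∧ n ≤ ent p (i+1))).card := by
  classical
  have himg : (fun ac : ℕ × ℕ => ac.1 - 1) '' excSet p n
      = ↑((Finset.range (p.length - 1)).filter
          (fun i => ent p i < n ∧ n ≤ ent p (i+1))) := by
    ext i
    simp only [Set.mem_image, Finset.coe_filter, Set.mem_setOf_eq, Finset.mem_range]
    constructor
    · rintro ⟨⟨a, c⟩, hmem, rfl⟩
      have h1 := exc_a_pos hp hn _ hmem
      obtain ⟨hac, hcL, hall, hleft, hright⟩ := hmem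
      dsimp only at h1 hac hcL hall hleft hright ⊢
      rcases hleft with h | h
      · omega
      · refine ⟨by have := hp.1; omega, h, ?_⟩
        have := hall a (le_refl a) hac
        rwa [show a - 1 + 1 = a by omega]
    · rintro ⟨hi, hlt, hge⟩
      obtain ⟨c, hc1, hc2, hc3, hc4⟩ := exists_exc hp hn hi hge
      exact ⟨(i+1, c), ⟨hc1, hc2, hc3, Or.inr (by simpa using hlt), hc4⟩, by simp⟩
  rw [← Set.ncard_image_of_injOn (exc_injOn hp hn), himg, Set.ncard_coe_finset]

lemma excBranch_card (hp : IsScat M p) {n : ℤ} (hn : 0 ≤ n) :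
    {ac ∈ excSet p n | ∃ i, ac.1 ≤ i ∧ i ≤ ac.2 ∧ n + 1 ≤ ent p i}.ncard
      = ((Finset.range (p.length - 1)).filter
          (fun i => ent p i < n ∧ n ≤ ent p (i+1) ∧ n + 1 ≤ ent p (i+2))).card := by
  classical
  have hstep := hp.2.2.2.2
  have hL := hp.1
  have hsub : {ac ∈ excSet p n | ∃ i, ac.1 ≤ i ∧ i ≤ ac.2 ∧ n + 1 ≤ ent p i} ⊆ excSet p n :=
    fun ac hac => hac.1
  have himg : (fun ac : ℕ × ℕ => ac.1 - 1) ''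
      {ac ∈ excSet p n | ∃ i, ac.1 ≤ i ∧ i ≤ ac.2 ∧ n + 1 ≤ ent p i}
      = ↑((Finset.range (p.length - 1)).filter
          (fun i => ent p i < n ∧ n ≤ ent p (i+1) ∧ n + 1 ≤ ent p (i+2))) := by
    ext i
    simp only [Set.mem_image, Finset.coe_filter, Set.mem_setOf_eq, Finset.mem_range]
    constructor
    · rintro ⟨⟨a, c⟩, ⟨hmem, j, hj1, hj2, hj3⟩, rfl⟩
      have h1 := exc_a_pos hp hn _ hmem
      obtain ⟨hac, hcL, hall, hleft, hright⟩ := hmem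
      dsimp only at h1 hac hcL hall hleft hright hj1 hj2 ⊢
      rcases hleft with h | h
      · omega
      · have hsa : |ent p ((a-1)+1) - ent p (a-1)| = 1 := hstep (a-1) (by omega)
        rw [show a - 1 + 1 = a by omega] at hsa
        have hsa' := step_bounds hsa
        have hpa : n ≤ ent p a := hall a (le_refl a) hac
        have hpan : ent p a = n := by omega
        have hja : a < j := by
          rcases Nat.lt_or_ge a j with h' | h'
          · exact h'
          · exfalso
            have hje : j = a := by omega
            rw [hje, hpan] at hj3; omega
        have hac1 : a + 1 ≤ c := by omega
        have hpa1 : n ≤ ent p (a+1) := hall (a+1) (by omega) hac1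
        have hsa1 := step_bounds (hstep a (by omega))
        refine ⟨by omega, h, ?_, ?_⟩
        · rwa [show a - 1 + 1 = a by omega]
        · rw [show a - 1 + 2 = a + 1 by omega]
          omega
    · rintro ⟨hi, hlt, hge, hge2⟩
      obtain ⟨c, hc1, hc2, hc3, hc4⟩ := exists_exc hp hn hi hge
      have hci : i + 2 ≤ c := by
        rcases Nat.lt_or_ge c (i+2) with h' | h'
        · exfalso
          have hc_eq : c = i + 1 := by omega
          rcases hc4 with h'' | h''
          · rw [hc_eq] at h''
            rw [h'', hp.2.2.1] at hge
            omega
          · rw [hc_eq] at h''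
            have : ent p (i+2) < n := by rwa [show i+1+1 = i+2 by omega] at h''
            omega
        · exact h'
      exact ⟨(i+1, c), ⟨⟨hc1, hc2, hc3, Or.inr (by simpa using hlt), hc4⟩,
        i+2, by omega, hci, hge2⟩, by simp⟩
  rw [← Set.ncard_image_of_injOn ((exc_injOn hp hn).mono hsub), himg, Set.ncard_coe_finset]

end CardLemmas

section Forward

variable {M : ℕ} {p : List ℤ}

/-- up-crossing count -/
def KF (p : List ℤ) (n : ℤ) : ℕ :=
  ((Finset.range (p.length - 1)).filter (fun i => ent p i < n ∧ n ≤ ent p (i+1))).card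

/-- branching up-crossing count -/
def BF (p : List ℤ) (n : ℤ) : ℕ :=
  ((Finset.range (p.length - 1)).filter
    (fun i => ent p i < n ∧ n ≤ ent p (i+1) ∧ n + 1 ≤ ent p (i+2))).card

lemma kappa_eq_KF (hp : IsScat M p) (n : Fin (M+1)) :
    kappa M p n = KF p ((n : ℕ) : ℤ) :=
  excSet_card hp (by positivity)

lemma beta_eq_BF (hp : IsScat M p) (n : Fin (M+1)) :
    beta M p n = BF p ((n : ℕ) : ℤ) :=
  excBranch_card hp (by positivity)

lemma BF_le_KF (p : List ℤ) (n : ℤ) : BF p n ≤ KF p n := by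
  apply Finset.card_le_card
  intro x hx
  simp only [Finset.mem_filter] at hx ⊢
  tauto

lemma BF_le_KF_succ (hp : IsScat M p) {n : ℤ} (hn : 0 ≤ n) : BF p n ≤ KF p (n+1) := by
  apply Finset.card_le_card_of_injOn (fun i => i + 1)
  · intro i hi
    simp only [Finset.mem_coe, Finset.mem_filter, Finset.mem_range] at hi ⊢
    obtain ⟨hir, h1, h2, h3⟩ := hi
    have hint := scat_interior hp (i+2) (by omega)
    have hs := step_bounds (hp.2.2.2.2 i hir)
    refine ⟨by omega, by omega, ?_⟩
    rwa [show i + 1 + 1 = i + 2 by omega]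
  · intro a _ b _ h
    simpa using h

lemma BF_pos (hp : IsScat M p) {n : ℤ} (hn : 0 ≤ n) (h : 1 ≤ KF p (n+1)) : 1 ≤ BF p n := by
  classical
  have hstep := hp.2.2.2.2
  obtain ⟨j, hj⟩ := Finset.card_pos.mp h
  simp only [Finset.mem_filter, Finset.mem_range] at hj
  obtain ⟨hjr, hj1, hj2⟩ := hj
  -- p_j = n, p_{j+1} = n+1
  have hsj := step_bounds (hstep j hjr)
  have hpj : ent p j = n := by omega
  have hpj1 : ent p (j+1) = n + 1 := by omega
  -- find the last index ≤ j with value < n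
  have hex : ∃ d, ent p (j - d) < n := by
    refine ⟨j, ?_⟩
    simp only [Nat.sub_self]
    rw [hp.2.1]; omega
  set d0 := Nat.find hex with hd0
  have hspec : ent p (j - d0) < n := Nat.find_spec hex
  have hd0j : d0 ≤ j := by
    apply Nat.find_min' hex
    simp only [Nat.sub_self]
    rw [hp.2.1]; omega
  have hd0pos : 1 ≤ d0 := by
    rcases Nat.eq_zero_or_pos d0 with h0 | h0
    · exfalso; rw [h0] at hspec; simp at hspec; omega
    · exact h0
  set i := j - d0 with hi
  have hup : ∀ e, e < d0 → n ≤ ent p (j - e) := fun e he => le_of_not_gt (Nat.find_min hex he)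
  have hi1 : n ≤ ent p (i + 1) := by
    have := hup (d0 - 1) (by omega)
    rwa [show j - (d0 - 1) = i + 1 by omega] at this
  have hiL : i < p.length - 1 := by omega
  have hsi := step_bounds (hstep i hiL)
  have hpi1 : ent p (i+1) = n := by omega
  have hi2 : n + 1 ≤ ent p (i + 2) := by
    rcases Nat.lt_or_ge (i+1) j with hlt | hge
    · have hd2 : 2 ≤ d0 := by omega
      have h2 : n ≤ ent p (i + 2) := by
        have := hup (d0 - 2) (by omega)
        rwa [show j - (d0 - 2) = i + 2 by omega] at this
      have hsi1 := step_bounds (hstep (i+1) (by omega))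
      have : ent p (i+1+1) = ent p (i+2) := by rw [show i+1+1 = i+2 by omega]
      omega
    · have hje : j = i + 1 := by omega
      have : ent p (i + 2) = ent p (j + 1) := by rw [hje]
      omega
  apply Finset.card_pos.mpr
  exact ⟨i, by simp only [Finset.mem_filter, Finset.mem_range]; exact ⟨by omega, hspec, hi1, hi2⟩⟩

end Forward

lemma BF_top {M : ℕ} {p : List ℤ} (hp : IsScat M p) : BF p (M : ℤ) = 0 := by
  rw [BF, Finset.card_eq_zero, Finset.filter_eq_empty_iff]
  intro i _
  have := scat_ent_le hp (i+2)
  simp only [not_and, not_le]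
  intro _ _
  omega

section Construction

lemma sum_map_add (f g : List ℤ → ℕ) (l : List (List ℤ)) :
    (l.map (fun e => f e + g e)).sum = (l.map f).sum + (l.map g).sum := by
  induction l with
  | nil => simp
  | cons e l ih => simp [ih]; omega

lemma sum_ind_eq_countP (q : List ℤ → Bool) (l : List (List ℤ)) :
    (l.map (fun e => if q e then 1 else 0)).sum = l.countP q := by
  induction l with
  | nil => simp
  | cons e l ih => by_cases h : q e <;> simp [List.countP_cons, h, ih] <;> omega

lemma countP_getD_congr (w c : ℤ) (cs : List (List ℤ)) (d d' : ℤ)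
    (hd : ¬ c ≤ d) (hd' : ¬ c ≤ d') :
    cs.countP (fun e => decide (c ≤ e.getD 1 d))
      = cs.countP (fun e => decide (c ≤ e.getD 1 d')) := by
  apply List.countP_congr
  intro e _
  match e with
  | [] => simp [List.getD, hd, hd']
  | [x] => simp [List.getD, hd, hd']
  | x :: y :: t => simp [List.getD]

variable (K B : ℕ → ℕ)

/-- the list of excursions at depth `n`, built with fuel `t` -/
def lvlAux : ℕ → ℕ → List (List ℤ)
  | 0, n => List.replicate (K n) [(n : ℤ)]
  | t+1, n =>
      (if B n = 0 then []
       else glue (n:ℤ) ((lvlAux t (n+1)).take (K (n+1) - B n + 1))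
         :: ((lvlAux t (n+1)).drop (K (n+1) - B n + 1)).map (fun e => glue (n:ℤ) [e]))
      ++ List.replicate (K n - B n) [(n : ℤ)]

variable (M : ℕ)

structure LInv (n : ℕ) (cs : List (List ℤ)) : Prop where
  len : cs.length = K n
  mem : ∀ e ∈ cs, e.head? = some (n:ℤ) ∧ e.getLast? = some (n:ℤ) ∧
        (∀ x ∈ e, (n:ℤ) ≤ x ∧ x ≤ (M:ℤ)) ∧ List.Chain' stp e
  cnt2 : ∀ m : ℕ, (cs.map (c2 (pl (m:ℤ)))).sum = if n < m then K m else 0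
  cnt3 : ∀ m : ℕ, (cs.map (c3 (ql (m:ℤ)))).sum = if n < m then B m else 0
  brn : cs.countP (fun e => decide ((n:ℤ) + 1 ≤ e.getD 1 (n:ℤ))) = B n

variable (hK0 : K 0 = 1) (hKM : ∀ m, M < m → K m = 0)
  (hKchain : ∀ m, K m = 0 → K (m+1) = 0)
  (hBK : ∀ m, B m ≤ K m) (hBK1 : ∀ m, B m ≤ K (m+1))
  (hBpos : ∀ m, 1 ≤ K (m+1) → 1 ≤ B m)

include hKM hKchain hBK hBK1 hBpos in
lemma lvlAux_inv : ∀ t n, M ≤ n + t → LInv K B M n (lvlAux K B t n) := by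
  intro t
  induction t with
  | zero =>
    intro n hn
    simp only [Nat.add_zero] at hn
    have hKn1 : K (n+1) = 0 := hKM _ (by omega)
    have hBn : B n = 0 := by have := hBK1 n; omega
    constructor
    · simp [lvlAux]
    · intro e he
      simp only [lvlAux, List.mem_replicate] at he
      obtain ⟨hne, rfl⟩ := he
      have hnM : n ≤ M := by
        by_contra h
        push_neg at h
        have := hKM n h
        omega
      refine ⟨rfl, rfl, ?_, by exact List.isChain_singleton _⟩
      intro x hx
      simp at hx
      subst hx
      constructor <;> [exact le_refl _; exact_mod_cast hnM]
    · intro m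
      have : ∀ m' : ℕ, n < m' → K m' = 0 := fun m' h => hKM _ (by omega)
      simp only [lvlAux, List.map_replicate]
      by_cases h : n < m
      · simp [c2, this m h, List.sum_replicate]
      · simp [c2, h, List.sum_replicate]
    · intro m
      have hBz : ∀ m' : ℕ, n < m' → B m' = 0 := by
        intro m' h
        have := hKM (m'+1) (by omega)
        have := hBK1 m'
        omega
      simp only [lvlAux, List.map_replicate]
      by_cases h : n < m
      · simp [c3, hBz m h, List.sum_replicate]
      · simp [c3, h, List.sum_replicate]
    · simp only [lvlAux]
      rw [List.countP_eq_zero.mpr, hBn]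
      intro e he
      simp only [List.mem_replicate] at he
      rw [he.2]
      simp
  | succ t ih =>
    intro n hn
    have hchild := ih (n+1) (by omega)
    set cs := lvlAux K B t (n+1) with hcs
    by_cases hB : B n = 0
    · -- no branching at level n
      have hK1 : K (n+1) = 0 := by
        by_contra h
        have := hBpos n (by omega)
        omega
      have hzero : ∀ m, n < m → K m = 0 := by
        intro m hm
        have key : ∀ d, K (n + 1 + d) = 0 := by
          intro d
          induction d with
          | zero => simpa using hK1
          | succ d ihd => have := hKchain (n+1+d) ihd; rwa [show n+1+(d+1) = (n+1+d)+1 by omega]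
        have := key (m - (n+1))
        rwa [show n + 1 + (m - (n+1)) = m by omega] at this
      have hBzero : ∀ m, n < m → B m = 0 := by
        intro m hm
        have := hzero (m+1) (by omega)
        have := hBK1 m
        omega
      have hshape : lvlAux K B (t+1) n = List.replicate (K n) [(n:ℤ)] := by
        simp only [lvlAux, hB, if_pos rfl, List.nil_append, Nat.sub_zero]
        rfl
      rw [hshape]
      constructor
      · simp
      · intro e he
        simp only [List.mem_replicate] at he
        obtain ⟨hne, rfl⟩ := he
        have hnM : n ≤ M := by
          by_contra h
          push_neg at h
          have := hKM n h
          omega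
        refine ⟨rfl, rfl, ?_, by exact List.isChain_singleton _⟩
        intro x hx
        simp at hx
        subst hx
        constructor <;> [exact le_refl _; exact_mod_cast hnM]
      · intro m
        simp only [List.map_replicate]
        by_cases h : n < m
        · simp [c2, hzero m h, List.sum_replicate]
        · simp [c2, h, List.sum_replicate]
      · intro m
        simp only [List.map_replicate]
        by_cases h : n < m
        · simp [c3, hBzero m h, List.sum_replicate]
        · simp [c3, h, List.sum_replicate]
      · rw [List.countP_eq_zero.mpr, hB]
        intro e he
        simp only [List.mem_replicate] at he
        rw [he.2]
        simp
    · -- B n ≥ 1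
      have hBn1 : 1 ≤ B n := by omega
      have hBKn := hBK n
      have hBK1n := hBK1 n
      have hK1 : 1 ≤ K (n+1) := le_trans hBn1 (hBK1 n)
      have hKn : 1 ≤ K n := le_trans hBn1 (hBK n)
      have hnM : n ≤ M := by
        by_contra h
        push_neg at h
        have := hKM n h
        omega
      set T := K (n+1) - B n + 1 with hT
      have hTle : T ≤ K (n+1) := by omega
      have hlen_cs : cs.length = K (n+1) := hchild.len
      have hlen_take : (cs.take T).length = T := by
        rw [List.length_take, hlen_cs]; omega
      have hlen_drop : (cs.drop T).length = B n - 1 := by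
        rw [List.length_drop, hlen_cs]; omega
      have hshape : lvlAux K B (t+1) n =
          (glue (n:ℤ) (cs.take T) :: (cs.drop T).map (fun e => glue (n:ℤ) [e]))
            ++ List.replicate (K n - B n) [(n : ℤ)] := by
        simp only [lvlAux]
        rw [if_neg hB, ← hcs, ← hT]
      have hcast : ((n+1 : ℕ) : ℤ) = (n:ℤ) + 1 := by push_cast; ring
      have hkid : ∀ e ∈ cs, Kid (n:ℤ) e := by
        intro e he
        obtain ⟨h1, _, h3, _⟩ := hchild.mem e he
        refine ⟨by rw [h1, hcast], fun x hx => ?_⟩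
        have := (h3 x hx).1
        omega
      have hkid_take : ∀ e ∈ cs.take T, Kid (n:ℤ) e :=
        fun e he => hkid e (List.take_subset _ _ he)
      have hkid_drop : ∀ e ∈ cs.drop T, Kid (n:ℤ) e :=
        fun e he => hkid e (List.drop_subset _ _ he)
      have hsplit : ∀ f : List ℤ → ℕ,
          ((cs.take T).map f).sum + ((cs.drop T).map f).sum = (cs.map f).sum := by
        intro f
        rw [← List.sum_append, ← List.map_append, List.take_append_drop]
      have htake_ne : cs.take T ≠ [] := by
        intro h
        have := hlen_take
        rw [h] at this
        simp at this
      -- a glue of any sublist of cs is a good excursion at level n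
      have hglue_mem : ∀ (cs' : List (List ℤ)), (∀ e ∈ cs', e ∈ cs) →
          (glue (n:ℤ) cs').head? = some (n:ℤ) ∧ (glue (n:ℤ) cs').getLast? = some (n:ℤ) ∧
          (∀ x ∈ glue (n:ℤ) cs', (n:ℤ) ≤ x ∧ x ≤ (M:ℤ)) ∧ List.Chain' stp (glue (n:ℤ) cs') := by
        intro cs' hsub
        refine ⟨glue_head _ _, glue_getLast _ _, ?_, ?_⟩
        · apply glue_mem
          · exact_mod_cast hnM
          · intro e he x hx
            have h3 := (hchild.mem e (hsub e he)).2.2.1 x hx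
            omega
        · apply glue_chain
          intro e he
          obtain ⟨h1, h2, _, h4⟩ := hchild.mem e (hsub e he)
          exact ⟨by rw [h1, hcast], by rw [h2, hcast], h4⟩
      rw [hshape]
      constructor
      · rw [List.length_append, List.length_cons, List.length_map, List.length_replicate,
          hlen_drop]
        omega
      · intro e he
        simp only [List.mem_append, List.mem_cons, List.mem_map, List.mem_replicate] at he
        rcases he with (rfl | ⟨a, ha, rfl⟩) | ⟨hne, rfl⟩
        · exact hglue_mem _ (fun e he => List.take_subset _ _ he)
        · refine hglue_mem [a] ?_
          intro e he
          simp at he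
          subst he
          exact List.drop_subset _ _ ha
        · refine ⟨rfl, rfl, ?_, by exact List.isChain_singleton _⟩
          intro x hx
          simp at hx
          subst hx
          constructor <;> [exact le_refl _; exact_mod_cast hnM]
      · -- cnt2
        intro m
        have hmif : ((m:ℤ) = (n:ℤ) + 1) ↔ (m = n + 1) := by
          constructor <;> (intro h; omega)
        simp only [List.map_append, List.sum_append, List.map_cons, List.sum_cons,
          List.map_replicate, List.map_map]
        rw [glue_c2 (m:ℤ) (n:ℤ) _ hkid_take]
        have hdrop_eq : ((cs.drop T).map (c2 (pl (m:ℤ)) ∘ fun e => glue (n:ℤ) [e])).sum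
            = ((cs.drop T).map (fun e => c2 (pl (m:ℤ)) e
                + if (m:ℤ) = (n:ℤ)+1 then 1 else 0)).sum := by
          congr 1
          apply List.map_congr_left
          intro e he
          simp only [Function.comp_apply]
          rw [glue_c2 (m:ℤ) (n:ℤ) [e]
            (fun x hx => by rw [List.mem_singleton] at hx; rw [hx]; exact hkid_drop e he)]
          simp
        rw [hdrop_eq, sum_map_add]
        have hconst : ((cs.drop T).map (fun _ => if (m:ℤ) = (n:ℤ)+1 then 1 else 0)).sum
            = if (m:ℤ) = (n:ℤ)+1 then B n - 1 else 0 := by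
          rw [List.map_const', List.sum_replicate, hlen_drop]
          by_cases h : (m:ℤ) = (n:ℤ)+1 <;> simp [h]
        rw [hconst]
        have hsum_cs := hsplit (c2 (pl (m:ℤ)))
        have hchild2 := hchild.cnt2 m
        have hrep : (List.replicate (K n - B n) (c2 (pl (m:ℤ)) [(n:ℤ)])).sum = 0 := by
          simp [c2, List.sum_replicate]
        rw [hrep, hlen_take]
        by_cases hm : m = n + 1
        · have hmz : (m:ℤ) = (n:ℤ)+1 := hmif.mpr hm
          have hz : ¬ (n + 1 < m) := by omega
          rw [if_pos hmz, if_pos hmz, if_pos (show n < m by omega)]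
          have hzero2 : ((cs.take T).map (c2 (pl (m:ℤ)))).sum
              + ((cs.drop T).map (c2 (pl (m:ℤ)))).sum = 0 := by
            rw [hsum_cs, hchild2, if_neg hz]
          have hKm : K m = K (n + 1) := by rw [hm]
          omega
        · have hmz : ¬ ((m:ℤ) = (n:ℤ)+1) := fun h => hm (hmif.mp h)
          rw [if_neg hmz, if_neg hmz]
          have heq : (if n + 1 < m then K m else 0) = (if n < m then K m else 0) := by
            by_cases h1 : n < m
            · rw [if_pos h1, if_pos (by omega)]
            · rw [if_neg h1, if_neg (by omega)]
          rw [← heq, ← hchild2, ← hsum_cs]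
          omega
      · -- cnt3
        intro m
        have hmif : ((m:ℤ) = (n:ℤ) + 1) ↔ (m = n + 1) := by
          constructor <;> (intro h; omega)
        simp only [List.map_append, List.sum_append, List.map_cons, List.sum_cons,
          List.map_replicate, List.map_map]
        rw [glue_c3 (m:ℤ) (n:ℤ) _ hkid_take]
        have hdrop_eq : ((cs.drop T).map (c3 (ql (m:ℤ)) ∘ fun e => glue (n:ℤ) [e])).sum
            = ((cs.drop T).map (fun e => c3 (ql (m:ℤ)) e
                + if (m:ℤ) = (n:ℤ)+1 then (if decide ((n:ℤ)+2 ≤ e.getD 1 (n:ℤ)) then 1 else 0) else 0)).sum := by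
          congr 1
          apply List.map_congr_left
          intro e he
          simp only [Function.comp_apply]
          rw [glue_c3 (m:ℤ) (n:ℤ) [e]
            (fun x hx => by rw [List.mem_singleton] at hx; rw [hx]; exact hkid_drop e he)]
          simp only [List.map_cons, List.map_nil, List.sum_cons, List.sum_nil, Nat.add_zero]
          congr 1
          by_cases h : (m:ℤ) = (n:ℤ)+1 <;> simp [h, List.countP_cons]
        rw [hdrop_eq, sum_map_add]
        have hrep : (List.replicate (K n - B n) (c3 (ql (m:ℤ)) [(n:ℤ)])).sum = 0 := by
          simp [c3, List.sum_replicate]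
        rw [hrep]
        have hsum_cs := hsplit (c3 (ql (m:ℤ)))
        have hchild3 := hchild.cnt3 m
        -- total branching count over cs equals B (n+1)
        have hbrncs : cs.countP (fun e => decide ((n:ℤ) + 2 ≤ e.getD 1 (n:ℤ))) = B (n+1) := by
          rw [← hchild.brn]
          apply List.countP_congr
          intro e he
          obtain ⟨h1, _, _, _⟩ := hchild.mem e he
          match e with
          | [] => simp at h1
          | [x] =>
            simp only [List.getD_cons_succ, List.getD_nil, decide_eq_true_eq, decide_eq_decide]
            omega
          | x :: y :: tl =>
            simp only [List.getD_cons_succ, List.getD_cons_zero, decide_eq_true_eq,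
              decide_eq_decide]
            omega
        have hcountsplit : (cs.take T).countP (fun e => decide ((n:ℤ) + 2 ≤ e.getD 1 (n:ℤ)))
            + (cs.drop T).countP (fun e => decide ((n:ℤ) + 2 ≤ e.getD 1 (n:ℤ)))
            = B (n+1) := by
          rw [← hbrncs, ← List.countP_append, List.take_append_drop]
        have hconst : ((cs.drop T).map (fun e => if (m:ℤ) = (n:ℤ)+1 then
              (if decide ((n:ℤ)+2 ≤ e.getD 1 (n:ℤ)) then 1 else 0) else 0)).sum
            = if (m:ℤ) = (n:ℤ)+1 then (cs.drop T).countP (fun e => decide ((n:ℤ)+2 ≤ e.getD 1 (n:ℤ))) else 0 := by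
          by_cases h : (m:ℤ) = (n:ℤ)+1
          · simp only [if_pos h]
            exact sum_ind_eq_countP _ _
          · simp [if_neg h]
        rw [hconst]
        by_cases hm : m = n + 1
        · have hmz : (m:ℤ) = (n:ℤ)+1 := hmif.mpr hm
          have hz : ¬ (n + 1 < m) := by omega
          rw [if_pos hmz, if_pos hmz, if_pos (show n < m by omega)]
          have hzero3 : ((cs.take T).map (c3 (ql (m:ℤ)))).sum
              + ((cs.drop T).map (c3 (ql (m:ℤ)))).sum = 0 := by
            rw [hsum_cs, hchild3, if_neg hz]
          have hBm : B m = B (n + 1) := by rw [hm]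
          omega
        · have hmz : ¬ ((m:ℤ) = (n:ℤ)+1) := fun h => hm (hmif.mp h)
          rw [if_neg hmz, if_neg hmz]
          have heq : (if n + 1 < m then B m else 0) = (if n < m then B m else 0) := by
            by_cases h1 : n < m
            · rw [if_pos h1, if_pos (by omega)]
            · rw [if_neg h1, if_neg (by omega)]
          rw [← heq, ← hchild3, ← hsum_cs]
          omega
      · -- brn
        rw [List.countP_append, List.countP_cons]
        have hrep0 : (List.replicate (K n - B n) [(n:ℤ)]).countP
            (fun e => decide ((n:ℤ) + 1 ≤ e.getD 1 (n:ℤ))) = 0 := by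
          apply List.countP_eq_zero.mpr
          intro e he
          simp only [List.mem_replicate] at he
          rw [he.2]
          simp [List.getD_cons_succ, List.getD_nil]
        have hg0 : (glue (n:ℤ) (cs.take T)).getD 1 (n:ℤ) = (n:ℤ) + 1 := by
          obtain ⟨e0, rest, h0⟩ : ∃ e0 rest, cs.take T = e0 :: rest := by
            cases h : cs.take T with
            | nil => exact absurd h htake_ne
            | cons a b => exact ⟨a, b, rfl⟩
          rw [h0]
          apply glue_getD1
          have := (hkid_take e0 (by rw [h0]; simp)).1
          exact this
        have hg0t : decide ((n:ℤ) + 1 ≤ (glue (n:ℤ) (cs.take T)).getD 1 (n:ℤ)) = true := by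
          rw [hg0]; simp
        have hmapdrop : ((cs.drop T).map (fun e => glue (n:ℤ) [e])).countP
            (fun e => decide ((n:ℤ) + 1 ≤ e.getD 1 (n:ℤ))) = B n - 1 := by
          rw [List.countP_map, ← hlen_drop]
          apply List.countP_eq_length.mpr
          intro e he
          simp only [Function.comp_apply]
          have hge : (glue (n:ℤ) [e]).getD 1 (n:ℤ) = (n:ℤ) + 1 :=
            glue_getD1 _ _ _ _ _ (hkid_drop e he).1
          rw [hge]
          simp
        rw [hrep0, hg0t, hmapdrop]
        simp
        omega

end Construction

section Assemble

lemma ent_get {l : List ℤ} {i : ℕ} (h : i < l.length) : ent l i = l[i] :=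
  List.getD_eq_getElem l 0 h

lemma ent_getLast {l : List ℤ} {x : ℤ} (h : l.getLast? = some x) :
    ent l (l.length - 1) = x := by
  rw [List.getLast?_eq_getElem?] at h
  rw [ent, List.getD_eq_getElem?_getD, h]
  rfl

lemma ent_append_left {l m : List ℤ} {i : ℕ} (h : i < l.length) :
    ent (l ++ m) i = ent l i := by
  rw [ent, ent, List.getD_eq_getElem _ _ (by rw [List.length_append]; omega),
    List.getD_eq_getElem l 0 h]
  exact List.getElem_append_left h

lemma ent_mem {l : List ℤ} {i : ℕ} (h : i < l.length) : ent l i ∈ l := by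
  rw [ent_get h]; exact List.getElem_mem h

lemma chain'_ent {l : List ℤ} (h : List.Chain' stp l) :
    ∀ i, i < l.length - 1 → |ent l (i+1) - ent l i| = 1 := by
  intro i hi
  have h1 : i < l.length := by omega
  have h2 : i + 1 < l.length := by omega
  rw [ent_get h1, ent_get h2]
  exact List.isChain_iff_getElem.mp h i (by omega)

lemma KF_eq_c2 (p : List ℤ) (n : ℤ) : KF p n = c2 (pl n) p := by
  rw [← c2_card, KF]
  congr 1
  apply Finset.filter_congr
  intro i _
  simp [pl]

lemma BF_eq_c3 {M : ℕ} {p : List ℤ} (hp : IsScat M p) {n : ℤ} (hn : 0 ≤ n) :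
    BF p n = c3 (ql n) p := by
  rw [← c3_card, BF]
  have hL := hp.1
  have hsplit : p.length - 1 = (p.length - 2) + 1 := by omega
  rw [hsplit, Finset.range_add_one, Finset.filter_insert, if_neg]
  · congr 1
    apply Finset.filter_congr
    intro i _
    simp [ql]
  · rw [show p.length - 2 + 1 = p.length - 1 by omega, hp.2.2.1]
    simp only [not_and, not_le]
    intro _ _
    omega

end Assemble

section Path

variable (K B : ℕ → ℕ) (M : ℕ)
variable (hK0 : K 0 = 1) (hKM : ∀ m, M < m → K m = 0)
  (hKchain : ∀ m, K m = 0 → K (m+1) = 0)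
  (hBK : ∀ m, B m ≤ K m) (hBK1 : ∀ m, B m ≤ K (m+1))
  (hBpos : ∀ m, 1 ≤ K (m+1) → 1 ≤ B m)

include hK0 hKM hKchain hBK hBK1 hBpos in
lemma exists_path : ∃ p, IsScat M p ∧ (∀ m : ℕ, KF p ((m:ℕ):ℤ) = K m)
    ∧ (∀ m : ℕ, BF p ((m:ℕ):ℤ) = B m) := by
  have inv := lvlAux_inv K B M hKM hKchain hBK hBK1 hBpos M 0 (by omega)
  set lvl0 := lvlAux K B M 0 with hlvl0
  refine ⟨glue (-1) lvl0, ?_⟩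
  have hlen : lvl0.length = 1 := by rw [inv.len, hK0]
  obtain ⟨e, he⟩ := List.length_eq_one_iff.mp hlen
  obtain ⟨hh, hl, hbnd, hch⟩ := inv.mem e (by rw [he]; simp)
  push_cast at hh hl hbnd
  have hne : e ≠ [] := by intro h; rw [h] at hh; simp at hh
  have hepos : 1 ≤ e.length := List.length_pos_iff.mpr hne
  have hkid0 : ∀ e' ∈ lvl0, Kid (-1) e' := by
    intro e' he'
    rw [he] at he'
    simp at he'
    subst he'
    refine ⟨by rw [hh]; norm_num, fun x hx => ?_⟩
    have := (hbnd x hx).1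
    omega
  have hPshape : glue (-1) lvl0 = -1 :: (e ++ [-1]) := by rw [he]; simp [glue]
  have hPlen : (glue (-1) lvl0).length = e.length + 2 := by rw [hPshape]; simp
  have hchain : List.Chain' stp (glue (-1) lvl0) := by
    apply glue_chain
    intro e' he'
    rw [he] at he'
    simp at he'
    subst he'
    exact ⟨by rw [hh]; norm_num, by rw [hl]; norm_num, hch⟩
  have hscat : IsScat M (glue (-1) lvl0) := by
    refine ⟨by omega, by rw [hPshape]; rfl, ?_, ?_, ?_⟩
    · exact ent_getLast (glue_getLast _ _)
    · intro i h1 h2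
      rw [hPlen] at h2
      rw [hPshape, show i = (i-1)+1 by omega, ent_cons_succ,
        ent_append_left (show i - 1 < e.length by omega)]
      have := hbnd _ (ent_mem (show i - 1 < e.length by omega))
      exact ⟨this.1, this.2⟩
    · exact chain'_ent hchain
  refine ⟨hscat, ?_, ?_⟩
  · intro m
    rw [KF_eq_c2, glue_c2 (m:ℤ) (-1) lvl0 hkid0, inv.cnt2 m, hlen]
    by_cases hm : m = 0
    · subst hm
      rw [if_neg (by omega), if_pos (by norm_num), hK0]
    · rw [if_pos (by omega), if_neg (by intro h; omega)]
      omega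
  · intro m
    have hbrn0 : lvl0.countP (fun e' => decide ((-1:ℤ) + 2 ≤ e'.getD 1 (-1))) = B 0 := by
      rw [← inv.brn]
      apply List.countP_congr
      intro e' he'
      match e' with
      | [] =>
        simp only [List.getD_nil, decide_eq_true_iff, decide_eq_decide]
        decide
      | [x] =>
        simp only [List.getD_cons_succ, List.getD_nil, decide_eq_true_iff, decide_eq_decide]
        omega
      | x :: y :: tl =>
        simp only [List.getD_cons_succ, List.getD_cons_zero, decide_eq_true_iff,
          decide_eq_decide]
        omega
    rw [BF_eq_c3 hscat (by positivity), glue_c3 (m:ℤ) (-1) lvl0 hkid0, inv.cnt3 m, hbrn0]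
    by_cases hm : m = 0
    · subst hm
      rw [if_neg (by omega), if_pos (by norm_num)]
      omega
    · rw [if_pos (by omega), if_neg (by intro h; omega)]
      omega

end Path

/-- Proposition 1 of the paper: for `k ∈ 𝔏_M`, the image of
`{p ∈ S_M | κ(p) = k}` under the branch count map `β` is exactly
`{b | min{𝟙, k̃} ≤ b ≤ min{k, k̃}}` (entrywise). -/
theorem branch_count_image (M : ℕ) (hM : 1 ≤ M)
    (k : Fin (M + 1) → ℕ) (hk0 : k 0 = 1) (hk1 : ∀ n, k n = 0 → ktilde M k n = 0) :
    beta M '' {p : List ℤ | IsScat M p ∧ kappa M p = k} =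
      {b : Fin (M + 1) → ℕ | ∀ n,
        min 1 (ktilde M k n) ≤ b n ∧ b n ≤ min (k n) (ktilde M k n)} := by
  classical
  ext b
  simp only [Set.mem_image, Set.mem_setOf_eq]
  constructor
  · rintro ⟨p, ⟨hp, hkap⟩, rfl⟩
    intro n
    have hbeta : beta M p n = BF p ((n:ℕ):ℤ) := beta_eq_BF hp n
    have hkapn : ∀ j : Fin (M+1), k j = KF p ((j:ℕ):ℤ) := fun j => by
      rw [← hkap]; exact kappa_eq_KF hp j
    constructor
    · by_cases h : ktilde M k n = 0
      · rw [h]; simp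
      · have hn1 : (n:ℕ) + 1 < M + 1 := by
          by_contra hc
          rw [ktilde, dif_neg hc] at h
          exact h rfl
        have hkt : ktilde M k n = k ⟨(n:ℕ)+1, hn1⟩ := by rw [ktilde, dif_pos hn1]
        have h1 : 1 ≤ KF p (((n:ℕ):ℤ)+1) := by
          have h2 := hkapn ⟨(n:ℕ)+1, hn1⟩
          rw [show ((((n:ℕ)+1 : ℕ)):ℤ) = ((n:ℕ):ℤ)+1 by push_cast; ring] at h2
          rw [← h2]
          rw [hkt] at h
          omega
        have h3 := BF_pos hp (by positivity) h1
        rw [hbeta]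
        exact le_trans (min_le_left _ _) h3
    · rw [hbeta]
      apply le_min
      · rw [hkapn n]
        exact BF_le_KF p _
      · by_cases hn1 : (n:ℕ) + 1 < M + 1
        · rw [ktilde, dif_pos hn1, hkapn ⟨(n:ℕ)+1, hn1⟩]
          have h4 := BF_le_KF_succ hp (n := ((n:ℕ):ℤ)) (by positivity)
          rwa [show ((((n:ℕ)+1 : ℕ)):ℤ) = ((n:ℕ):ℤ)+1 by push_cast; ring]
        · have hnM : (n:ℕ) = M := by have := n.isLt; omega
          rw [ktilde, dif_neg hn1]
          have h5 : BF p ((n:ℕ):ℤ) = 0 := by rw [hnM]; exact BF_top hp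
          omega
  · intro hb
    set K : ℕ → ℕ := fun m => if h : m < M + 1 then k ⟨m, h⟩ else 0 with hKdef
    set B : ℕ → ℕ := fun m => if h : m < M + 1 then b ⟨m, h⟩ else 0 with hBdef
    have hKlt : ∀ m (h : m < M + 1), K m = k ⟨m, h⟩ := fun m h => by
      rw [hKdef]; exact dif_pos h
    have hBlt : ∀ m (h : m < M + 1), B m = b ⟨m, h⟩ := fun m h => by
      rw [hBdef]; exact dif_pos h
    have hKge : ∀ m, ¬ (m < M + 1) → K m = 0 := fun m h => by
      rw [hKdef]; exact dif_neg h
    have hBge : ∀ m, ¬ (m < M + 1) → B m = 0 := fun m h => by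
      rw [hBdef]; exact dif_neg h
    have hktilde : ∀ m (h : m < M + 1), ktilde M k ⟨m, h⟩ = K (m+1) := by
      intro m h
      by_cases h1 : m + 1 < M + 1
      · rw [ktilde, hKlt (m+1) h1]
        exact dif_pos h1
      · rw [ktilde, hKge (m+1) h1]
        exact dif_neg h1
    have hK0' : K 0 = 1 := by
      rw [hKlt 0 (by omega), show (⟨0, by omega⟩ : Fin (M+1)) = 0 from rfl, hk0]
    have hKM' : ∀ m, M < m → K m = 0 := fun m h => hKge m (by omega)
    have hKchain' : ∀ m, K m = 0 → K (m+1) = 0 := by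
      intro m h
      by_cases h1 : m + 1 < M + 1
      · have h2 : m < M + 1 := by omega
        rw [hKlt m h2] at h
        have := hk1 ⟨m, h2⟩ h
        rw [hktilde m h2] at this
        exact this
      · exact hKge _ h1
    have hBK' : ∀ m, B m ≤ K m := by
      intro m
      by_cases h1 : m < M + 1
      · rw [hBlt m h1, hKlt m h1]
        exact le_trans (hb ⟨m, h1⟩).2 (min_le_left _ _)
      · rw [hBge m h1]; omega
    have hBK1' : ∀ m, B m ≤ K (m+1) := by
      intro m
      by_cases h1 : m < M + 1
      · rw [hBlt m h1, ← hktilde m h1]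
        exact le_trans (hb ⟨m, h1⟩).2 (min_le_right _ _)
      · rw [hBge m h1]; omega
    have hBpos' : ∀ m, 1 ≤ K (m+1) → 1 ≤ B m := by
      intro m h
      have h1 : m < M + 1 := by
        by_contra hc
        rw [hKge (m+1) (by omega)] at h
        omega
      rw [hBlt m h1]
      have h2 := (hb ⟨m, h1⟩).1
      rw [hktilde m h1] at h2
      omega
    obtain ⟨p, hscat, hKF, hBF⟩ := exists_path K B M hK0' hKM' hKchain' hBK' hBK1' hBpos'
    refine ⟨p, ⟨hscat, ?_⟩, ?_⟩
    · funext n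
      rw [kappa_eq_KF hscat n, hKF (n:ℕ), hKlt (n:ℕ) n.isLt]
    · funext n
      rw [beta_eq_BF hscat n, hBF (n:ℕ), hBlt (n:ℕ) n.isLt]
end

section
/- Let M ≥ 1 be an integer, let R = (R_0, …, R_M) with −1 < R_j < 1 for all j, and let p ∈ S_M be a scattering sequence with κ(p) = k and β(p) = b. Then the weight of p satisfies w(p) = (−R)^{k̃−b} · R^{k−b} · T^{2b}, where k̃ = (k_1, …, k_M, 0) and powers of vectors are taken entrywise with the resulting products over the coordinates 0, …, M. -/
/-- The weight factor attached to interior index `i` of the sequence `p`: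
`R_j` if `p_{i-1} = p_{i+1} = p_i - 1`, `-R_j` if `p_{i-1} = p_{i+1} = p_i + 1`,
and the transmission coefficient `T_j = √(1 - R_j²)` otherwise (`j = p_i`). -/
noncomputable def wstep (R : ℤ → ℝ) (p : List ℤ) (i : ℕ) : ℝ :=
  if ent p (i - 1) = ent p i - 1 ∧ ent p (i + 1) = ent p i - 1 then R (ent p i)
  else if ent p (i - 1) = ent p i + 1 ∧ ent p (i + 1) = ent p i + 1 then -R (ent p i)
  else Real.sqrt (1 - R (ent p i) ^ 2)

/-- The weight of a scattering sequence `p = (p_0, ..., p_L)`: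
the product of the factors `w_i` for `1 ≤ i ≤ L - 1`. -/
noncomputable def weight (R : ℤ → ℝ) (p : List ℤ) : ℝ :=
  ∏ i ∈ Finset.Icc 1 (p.length - 2), wstep R p i

section Helpers

variable {M : ℕ} {p : List ℤ}

lemma step_cases (hp : IsScat M p) {i : ℕ} (hi : i < p.length - 1) :
    ent p (i + 1) = ent p i + 1 ∨ ent p (i + 1) = ent p i - 1 := by
  have h := hp.2.2.2.2 i hi
  rcases (abs_eq (by norm_num : (0:ℤ) ≤ 1)).1 h with h' | h'
  · left; omega
  · right; omega

lemma idx_interior (hp : IsScat M p) {i : ℕ} (hi : i ≤ p.length - 1)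
    (h : 0 ≤ ent p i) : 1 ≤ i ∧ i ≤ p.length - 2 := by
  obtain ⟨hL, h0, hlast, -, -⟩ := hp
  constructor
  · rcases Nat.eq_zero_or_pos i with rfl | h1
    · omega
    · exact h1
  · by_contra hc
    have : i = p.length - 1 := by omega
    rw [this] at h; omega

/-- Up-crossing indices into level `n`. -/
def Uset (p : List ℤ) (n : ℤ) : Finset ℕ :=
  (Finset.range (p.length - 1)).filter fun i => ent p i = n - 1 ∧ ent p (i + 1) = n

/-- Down-crossing indices out of level `n`. -/
def Dset (p : List ℤ) (n : ℤ) : Finset ℕ :=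
  (Finset.range (p.length - 1)).filter fun i => ent p i = n ∧ ent p (i + 1) = n - 1

/-- Branched up-crossing indices. -/
def Bset (p : List ℤ) (n : ℤ) : Finset ℕ :=
  (Uset p n).filter fun i => ent p (i + 2) = n + 1

/-- Right endpoint of the excursion starting right after the up-crossing at `i`. -/
noncomputable def cEnd (p : List ℤ) (n : ℤ) (i : ℕ) : ℕ :=
  sInf {j : ℕ | i + 1 ≤ j ∧ ent p j < n} - 1

lemma cEnd_spec (hp : IsScat M p) {n : ℤ} (hn : 0 ≤ n) {i : ℕ} (hi : i ∈ Uset p n) :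
    i + 1 ≤ cEnd p n i ∧ cEnd p n i ≤ p.length - 2 ∧
      (∀ j, i + 1 ≤ j → j ≤ cEnd p n i → n ≤ ent p j) ∧
      ent p (cEnd p n i + 1) < n := by
  obtain ⟨hir, hfi, hfi1⟩ :
      i < p.length - 1 ∧ ent p i = n - 1 ∧ ent p (i + 1) = n := by
    simpa [Uset] using hi
  set S : Set ℕ := {j : ℕ | i + 1 ≤ j ∧ ent p j < n} with hS
  have hcE : cEnd p n i = sInf S - 1 := by rw [hS]; rfl
  have hLmem : p.length - 1 ∈ S := by
    refine ⟨by omega, ?_⟩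
    rw [hp.2.2.1]; omega
  have hne : S.Nonempty := ⟨_, hLmem⟩
  have hmem := Nat.sInf_mem hne
  have hle : sInf S ≤ p.length - 1 := Nat.sInf_le hLmem
  have hge : i + 1 ≤ sInf S := hmem.1
  have hgt : i + 1 < sInf S := by
    rcases Nat.lt_or_ge (i + 1) (sInf S) with h | h
    · exact h
    · exfalso
      have heq : sInf S = i + 1 := by omega
      rw [heq] at hmem
      have := hmem.2
      omega
  have hL3 := hp.1
  refine ⟨by omega, by omega, ?_, ?_⟩
  · intro j h1 h2
    have hj : j ∉ S := Nat.notMem_of_lt_sInf (by omega)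
    simp only [hS, Set.mem_setOf_eq, not_and, not_lt] at hj
    exact hj h1
  · have : cEnd p n i + 1 = sInf S := by omega
    rw [this]; exact hmem.2

lemma cEnd_unique (hp : IsScat M p) {n : ℤ} {i c : ℕ} (hi : i ∈ Uset p n)
    (h1 : i + 1 ≤ c) (h2 : ∀ j, i + 1 ≤ j → j ≤ c → n ≤ ent p j)
    (h3 : ent p (c + 1) < n) : c = cEnd p n i := by
  set S : Set ℕ := {j : ℕ | i + 1 ≤ j ∧ ent p j < n} with hS
  have hcE : cEnd p n i = sInf S - 1 := by rw [hS]; rfl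
  have hcm : c + 1 ∈ S := ⟨by omega, h3⟩
  have hne : S.Nonempty := ⟨_, hcm⟩
  have hmem := Nat.sInf_mem hne
  have hle : sInf S ≤ c + 1 := Nat.sInf_le hcm
  have heq : sInf S = c + 1 := by
    rcases Nat.lt_or_ge (sInf S) (c + 1) with h | h
    · exfalso
      have := h2 (sInf S) hmem.1 (by omega)
      have := hmem.2
      omega
    · omega
  omega


lemma mem_excSet_image (hp : IsScat M p) {n : ℤ} (hn : 0 ≤ n) :
    excSet p n = (fun i => (i + 1, cEnd p n i)) '' ↑(Uset p n) := by
  have hL3 := hp.1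
  ext ⟨a, c⟩
  simp only [Set.mem_image, Finset.coe_sort_coe, Finset.mem_coe, Prod.mk.injEq]
  constructor
  · rintro ⟨h1, h2, h3, h4, h5⟩
    have ha0 : a ≠ 0 := by
      intro h
      have := h3 a le_rfl h1
      rw [h, hp.2.1] at this
      omega
    have hfa1 : ent p (a - 1) < n := by
      rcases h4 with h | h
      · exact absurd h ha0
      · exact h
    have hfa : n ≤ ent p a := h3 a le_rfl h1
    have haL : a ≤ p.length - 2 := by
      rcases Nat.lt_or_ge a (p.length - 1) with h | h
      · omega
      · exfalso
        have : a = p.length - 1 := by omega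
        rw [this, hp.2.2.1] at hfa
        omega
    have hstep := step_cases hp (i := a - 1) (by omega)
    have ha1 : a - 1 + 1 = a := by omega
    rw [ha1] at hstep
    have hfa' : ent p a = n ∧ ent p (a - 1) = n - 1 := by
      rcases hstep with h | h <;> omega
    have hcL : c ≤ p.length - 2 := by
      rcases Nat.lt_or_ge c (p.length - 1) with h | h
      · omega
      · exfalso
        have hcl : c = p.length - 1 := by omega
        have := h3 c h1 le_rfl
        rw [hcl, hp.2.2.1] at this
        omega
    have hfc1 : ent p (c + 1) < n := by
      rcases h5 with h | h
      · omega
      · exact h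
    have hiU : a - 1 ∈ Uset p n := by
      simp only [Uset, Finset.mem_filter, Finset.mem_range]
      exact ⟨by omega, hfa'.2, by rw [ha1]; exact hfa'.1⟩
    refine ⟨a - 1, hiU, by omega, ?_⟩
    exact (cEnd_unique hp hiU (by omega) (fun j hj1 hj2 => h3 j (by omega) hj2) hfc1).symm
  · rintro ⟨i, hiU, rfl, rfl⟩
    obtain ⟨hc1, hc2, hc3, hc4⟩ := cEnd_spec hp hn hiU
    obtain ⟨hir, hfi, hfi1⟩ :
        i < p.length - 1 ∧ ent p i = n - 1 ∧ ent p (i + 1) = n := by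
      simpa [Uset] using hiU
    refine ⟨hc1, by omega, fun j hj1 hj2 => hc3 j hj1 hj2, Or.inr ?_, Or.inr hc4⟩
    simpa using hfi.le.trans_lt (by omega)

lemma kappa_eq_card (hp : IsScat M p) (n : Fin (M + 1)) :
    kappa M p n = (Uset p ((n : ℕ) : ℤ)).card := by
  rw [kappa, mem_excSet_image hp (by positivity),
    Set.ncard_image_of_injective _ (fun a b h => by
      simpa using congrArg Prod.fst h),
    Set.ncard_coe_finset]

lemma branched_iff (hp : IsScat M p) {n : ℤ} (hn : 0 ≤ n) {i : ℕ} (hi : i ∈ Uset p n) :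
    (∃ j, i + 1 ≤ j ∧ j ≤ cEnd p n i ∧ n + 1 ≤ ent p j) ↔ i ∈ Bset p n := by
  obtain ⟨hc1, hc2, hc3, hc4⟩ := cEnd_spec hp hn hi
  obtain ⟨hir, hfi, hfi1⟩ :
      i < p.length - 1 ∧ ent p i = n - 1 ∧ ent p (i + 1) = n := by
    simpa [Uset] using hi
  have hL3 := hp.1
  constructor
  · rintro ⟨j, hj1, hj2, hj3⟩
    have hji : j ≠ i + 1 := by
      intro h; rw [h] at hj3; omega
    have hcge : i + 2 ≤ cEnd p n i := by omega
    have hf2 : n ≤ ent p (i + 2) := hc3 (i + 2) (by omega) hcge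
    have hstep := step_cases hp (i := i + 1) (by omega)
    have h12 : i + 1 + 1 = i + 2 := by omega
    rw [h12] at hstep
    simp only [Bset, Finset.mem_filter]
    exact ⟨hi, by omega⟩
  · intro hB
    have hf2 : ent p (i + 2) = n + 1 := by
      simpa [Bset, hi] using hB
    have hcge : i + 2 ≤ cEnd p n i := by
      rcases Nat.lt_or_ge (cEnd p n i) (i + 2) with h | h
      · exfalso
        have : cEnd p n i + 1 = i + 2 := by omega
        rw [this] at hc4
        omega
      · omega
    exact ⟨i + 2, by omega, hcge, by omega⟩

lemma beta_eq_card (hp : IsScat M p) (n : Fin (M + 1)) :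
    beta M p n = (Bset p ((n : ℕ) : ℤ)).card := by
  have hn : (0:ℤ) ≤ ((n : ℕ) : ℤ) := by positivity
  have hset : {ac ∈ excSet p ((n : ℕ) : ℤ) |
      ∃ i, ac.1 ≤ i ∧ i ≤ ac.2 ∧ ((n : ℕ) : ℤ) + 1 ≤ ent p i} =
      (fun i => (i + 1, cEnd p ((n : ℕ) : ℤ) i)) '' ↑(Bset p ((n : ℕ) : ℤ)) := by
    ext ⟨a, c⟩
    simp only [Set.mem_setOf_eq, Set.mem_image, Finset.mem_coe, Prod.mk.injEq]
    constructor
    · rintro ⟨hexc, j, hj1, hj2, hj3⟩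
      rw [mem_excSet_image hp hn] at hexc
      obtain ⟨i, hiU, heq⟩ := hexc
      cases heq
      have : i ∈ Bset p ((n : ℕ) : ℤ) :=
        (branched_iff hp hn hiU).1 ⟨j, hj1, hj2, hj3⟩
      exact ⟨i, this, rfl, rfl⟩
    · rintro ⟨i, hiB, rfl, rfl⟩
      have hiU : i ∈ Uset p ((n : ℕ) : ℤ) := Finset.mem_of_mem_filter _ hiB
      refine ⟨?_, (branched_iff hp hn hiU).2 hiB⟩
      rw [mem_excSet_image hp hn]
      exact ⟨i, hiU, rfl⟩
  rw [beta, hset,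
    Set.ncard_image_of_injective _ (fun a b h => by
      simpa using congrArg Prod.fst h),
    Set.ncard_coe_finset]


lemma card_U_eq_card_D (hp : IsScat M p) {n : ℤ} (hn : 0 ≤ n) :
    (Uset p n).card = (Dset p n).card := by
  have hL3 := hp.1
  have h0 : ∑ i ∈ Finset.range (p.length - 1),
      ((if n ≤ ent p (i + 1) then (1:ℤ) else 0) - (if n ≤ ent p i then 1 else 0)) = 0 := by
    rw [Finset.sum_range_sub (fun i => if n ≤ ent p i then (1:ℤ) else 0)]
    rw [hp.2.2.1, hp.2.1]
    split_ifs <;> omega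
  have h1 : ∑ i ∈ Finset.range (p.length - 1),
      ((if n ≤ ent p (i + 1) then (1:ℤ) else 0) - (if n ≤ ent p i then 1 else 0)) =
      ∑ i ∈ Finset.range (p.length - 1),
      ((if ent p i = n - 1 ∧ ent p (i + 1) = n then (1:ℤ) else 0)
        - (if ent p i = n ∧ ent p (i + 1) = n - 1 then 1 else 0)) := by
    refine Finset.sum_congr rfl fun i hi => ?_
    rw [Finset.mem_range] at hi
    have hstep := step_cases hp hi
    split_ifs <;> omega
  rw [h1, Finset.sum_sub_distrib, Finset.sum_boole, Finset.sum_boole,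
    sub_eq_zero] at h0
  have := Nat.cast_injective (R := ℤ) h0
  simpa [Uset, Dset] using this

lemma card_S1 (hp : IsScat M p) {n : ℤ} (hn : 0 ≤ n) :
    ((Finset.Icc 1 (p.length - 2)).filter
      (fun j => ent p j = n ∧ ent p (j - 1) = n - 1)).card = (Uset p n).card := by
  have hL3 := hp.1
  apply Finset.card_bij (fun j _ => j - 1)
  · intro j hj
    simp only [Finset.mem_filter, Finset.mem_Icc] at hj
    obtain ⟨⟨hj1, hj2⟩, hfj, hfj1⟩ := hj
    simp only [Uset, Finset.mem_filter, Finset.mem_range]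
    have he : j - 1 + 1 = j := by omega
    rw [he]
    exact ⟨by omega, hfj1, hfj⟩
  · intro j1 h1 j2 h2 h
    simp only [Finset.mem_filter, Finset.mem_Icc] at h1 h2
    omega
  · intro i hi
    simp only [Uset, Finset.mem_filter, Finset.mem_range] at hi
    obtain ⟨hir, hfi, hfi1⟩ := hi
    have hint := idx_interior hp (i := i + 1) (by omega) (by omega)
    refine ⟨i + 1, ?_, by omega⟩
    simp only [Finset.mem_filter, Finset.mem_Icc]
    refine ⟨⟨hint.1, hint.2⟩, hfi1, by simpa using hfi⟩

lemma card_tu (hp : IsScat M p) {n : ℤ} (hn : 0 ≤ n) :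
    ((Finset.Icc 1 (p.length - 2)).filter
      (fun j => ent p j = n ∧ ent p (j - 1) = n - 1 ∧ ent p (j + 1) = n + 1)).card
      = (Bset p n).card := by
  have hL3 := hp.1
  apply Finset.card_bij (fun j _ => j - 1)
  · intro j hj
    simp only [Finset.mem_filter, Finset.mem_Icc] at hj
    obtain ⟨⟨hj1, hj2⟩, hfj, hfj1, hfj2⟩ := hj
    simp only [Bset, Uset, Finset.mem_filter, Finset.mem_range]
    have he : j - 1 + 1 = j := by omega
    have he2 : j - 1 + 2 = j + 1 := by omega
    rw [he, he2]
    exact ⟨⟨by omega, hfj1, hfj⟩, hfj2⟩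
  · intro j1 h1 j2 h2 h
    simp only [Finset.mem_filter, Finset.mem_Icc] at h1 h2
    omega
  · intro i hi
    simp only [Bset, Uset, Finset.mem_filter, Finset.mem_range] at hi
    obtain ⟨⟨hir, hfi, hfi1⟩, hfi2⟩ := hi
    have hint := idx_interior hp (i := i + 1) (by omega) (by omega)
    refine ⟨i + 1, ?_, by omega⟩
    simp only [Finset.mem_filter, Finset.mem_Icc]
    have he2 : i + 1 + 1 = i + 2 := by omega
    rw [he2]
    exact ⟨⟨hint.1, hint.2⟩, hfi1, by simpa using hfi, hfi2⟩

lemma S2_eq (hp : IsScat M p) {n : ℤ} (hn : 0 ≤ n) :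
    (Finset.Icc 1 (p.length - 2)).filter
      (fun j => ent p j = n ∧ ent p (j + 1) = n - 1) = Dset p n := by
  have hL3 := hp.1
  ext j
  simp only [Dset, Finset.mem_filter, Finset.mem_Icc, Finset.mem_range]
  constructor
  · rintro ⟨⟨h1, h2⟩, h3, h4⟩
    exact ⟨by omega, h3, h4⟩
  · rintro ⟨h1, h3, h4⟩
    have hint := idx_interior hp (i := j) (by omega) (by omega)
    exact ⟨⟨hint.1, hint.2⟩, h3, h4⟩

lemma S3_eq (hp : IsScat M p) {n : ℤ} (hn : 0 ≤ n) :
    (Finset.Icc 1 (p.length - 2)).filter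
      (fun j => ent p j = n ∧ ent p (j + 1) = n + 1) = Uset p (n + 1) := by
  have hL3 := hp.1
  ext j
  simp only [Uset, Finset.mem_filter, Finset.mem_Icc, Finset.mem_range]
  constructor
  · rintro ⟨⟨h1, h2⟩, h3, h4⟩
    exact ⟨by omega, by omega, h4⟩
  · rintro ⟨h1, h3, h4⟩
    have hint := idx_interior hp (i := j) (by omega) (by omega)
    exact ⟨⟨hint.1, hint.2⟩, by omega, h4⟩

lemma card_S4 (hp : IsScat M p) {n : ℤ} (hn : 0 ≤ n) :
    ((Finset.Icc 1 (p.length - 2)).filter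
      (fun j => ent p j = n ∧ ent p (j - 1) = n + 1)).card = (Dset p (n + 1)).card := by
  have hL3 := hp.1
  apply Finset.card_bij (fun j _ => j - 1)
  · intro j hj
    simp only [Finset.mem_filter, Finset.mem_Icc] at hj
    obtain ⟨⟨hj1, hj2⟩, hfj, hfj1⟩ := hj
    simp only [Dset, Finset.mem_filter, Finset.mem_range]
    have he : j - 1 + 1 = j := by omega
    rw [he]
    exact ⟨by omega, hfj1, by omega⟩
  · intro j1 h1 j2 h2 h
    simp only [Finset.mem_filter, Finset.mem_Icc] at h1 h2
    omega
  · intro i hi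
    simp only [Dset, Finset.mem_filter, Finset.mem_range] at hi
    obtain ⟨hir, hfi, hfi1⟩ := hi
    have hint := idx_interior hp (i := i + 1) (by omega) (by omega)
    refine ⟨i + 1, ?_, by omega⟩
    simp only [Finset.mem_filter, Finset.mem_Icc]
    refine ⟨⟨hint.1, hint.2⟩, by omega, by simpa using hfi⟩

lemma Uset_top (hp : IsScat M p) : Uset p ((M : ℤ) + 1) = ∅ := by
  have hL3 := hp.1
  ext i
  simp only [Uset, Finset.mem_filter, Finset.mem_range, Finset.notMem_empty,
    iff_false, not_and]
  intro hir hfi hfi1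
  have hint := idx_interior hp (i := i + 1) (by omega) (by omega)
  have := (hp.2.2.2.1 (i + 1) hint.1 hint.2).2
  omega


lemma fiber_prod (hp : IsScat M p) (R : ℤ → ℝ) {n : ℤ} (hn : 0 ≤ n) :
    ∏ j ∈ (Finset.Icc 1 (p.length - 2)).filter (fun j => ent p j = n), wstep R p j =
      R n ^ ((Uset p n).card - (Bset p n).card) *
        (-R n) ^ ((Uset p (n + 1)).card - (Bset p n).card) *
        Real.sqrt (1 - R n ^ 2) ^ (2 * (Bset p n).card) := by
  classical
  have hL3 := hp.1
  set icc := Finset.Icc 1 (p.length - 2) with hicc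
  have hmem : ∀ j ∈ icc, 1 ≤ j ∧ j ≤ p.length - 2 ∧
      (ent p j = ent p (j - 1) + 1 ∨ ent p j = ent p (j - 1) - 1) ∧
      (ent p (j + 1) = ent p j + 1 ∨ ent p (j + 1) = ent p j - 1) := by
    intro j hj
    rw [hicc, Finset.mem_Icc] at hj
    have hs1 := step_cases hp (i := j - 1) (by omega)
    have hs2 := step_cases hp (i := j) (by omega)
    have he : j - 1 + 1 = j := by omega
    rw [he] at hs1
    exact ⟨hj.1, hj.2, by omega, hs2⟩
  set P0 : ℕ → Prop := fun j => ent p j = n with hP0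
  set P1 : ℕ → Prop := fun j => ent p (j - 1) = n - 1 with hP1
  set P2 : ℕ → Prop := fun j => ent p (j + 1) = n - 1 with hP2
  set fib := icc.filter P0 with hfib
  -- the four classes
  set spk := (fib.filter P1).filter P2 with hspk
  set stu := (fib.filter P1).filter (fun j => ¬ P2 j) with hstu
  set std := (fib.filter fun j => ¬ P1 j).filter P2 with hstd
  set svl := (fib.filter fun j => ¬ P1 j).filter (fun j => ¬ P2 j) with hsvl
  -- values on the classes
  have hv1 : ∀ j ∈ spk, wstep R p j = R n := by
    intro j hj
    rw [hspk, Finset.mem_filter, Finset.mem_filter, Finset.mem_filter] at hj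
    obtain ⟨⟨⟨hjicc, h0⟩, h1⟩, h2⟩ := hj
    rw [wstep, h0]
    rw [if_pos ⟨h1, h2⟩]
  have hv2 : ∀ j ∈ stu, wstep R p j = Real.sqrt (1 - R n ^ 2) := by
    intro j hj
    rw [hstu, Finset.mem_filter, Finset.mem_filter, Finset.mem_filter] at hj
    obtain ⟨⟨⟨hjicc, h0⟩, h1⟩, h2⟩ := hj
    rw [wstep, h0]
    rw [if_neg (by rintro ⟨-, hc⟩; exact h2 hc), if_neg (by
      rintro ⟨hc, -⟩
      rw [hP1] at h1
      omega)]
  have hv3 : ∀ j ∈ std, wstep R p j = Real.sqrt (1 - R n ^ 2) := by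
    intro j hj
    rw [hstd, Finset.mem_filter, Finset.mem_filter, Finset.mem_filter] at hj
    obtain ⟨⟨⟨hjicc, h0⟩, h1⟩, h2⟩ := hj
    have hm := hmem j hjicc
    rw [hP1] at h1
    rw [hP0] at h0
    rw [wstep, h0]
    rw [if_neg (by rintro ⟨hc, -⟩; omega), if_neg (by
      rintro ⟨-, hc⟩
      rw [hP2] at h2
      omega)]
  have hv4 : ∀ j ∈ svl, wstep R p j = -R n := by
    intro j hj
    rw [hsvl, Finset.mem_filter, Finset.mem_filter, Finset.mem_filter] at hj
    obtain ⟨⟨⟨hjicc, h0⟩, h1⟩, h2⟩ := hj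
    have hm := hmem j hjicc
    rw [hP1] at h1
    rw [hP2] at h2
    rw [hP0] at h0
    rw [wstep, h0]
    rw [if_neg (by rintro ⟨-, hc⟩; omega), if_pos ⟨by omega, by omega⟩]
  -- card equations
  have hcs1 : fib.filter P1 = icc.filter (fun j => ent p j = n ∧ ent p (j - 1) = n - 1) := by
    rw [hfib, Finset.filter_filter]
  have hsplit1 : spk.card + stu.card = (Uset p n).card := by
    rw [hspk, hstu, Finset.card_filter_add_card_filter_not, hcs1, hicc,
      card_S1 hp hn]
  have htu_set : stu = icc.filter
      (fun j => ent p j = n ∧ ent p (j - 1) = n - 1 ∧ ent p (j + 1) = n + 1) := by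
    rw [hstu, hcs1, Finset.filter_filter]
    apply Finset.filter_congr
    intro j hj
    have hm := hmem j hj
    simp only [hP2]
    constructor
    · rintro ⟨⟨h0, h1⟩, h2⟩
      exact ⟨h0, h1, by omega⟩
    · rintro ⟨h0, h1, h2⟩
      exact ⟨⟨h0, h1⟩, by omega⟩
  have htu : stu.card = (Bset p n).card := by
    rw [htu_set, hicc, card_tu hp hn]
  have h2a : spk = (icc.filter (fun j => ent p j = n ∧ ent p (j + 1) = n - 1)).filter P1 := by
    rw [hspk, hcs1, Finset.filter_filter, Finset.filter_filter]
    apply Finset.filter_congr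
    intro j hj
    simp only [hP1, hP2]
    tauto
  have h2b : std = (icc.filter (fun j => ent p j = n ∧ ent p (j + 1) = n - 1)).filter
      (fun j => ¬ P1 j) := by
    rw [hstd, hfib, Finset.filter_filter, Finset.filter_filter, Finset.filter_filter]
    apply Finset.filter_congr
    intro j hj
    simp only [hP0, hP1, hP2]
    tauto
  have hsplit2 : spk.card + std.card = (Uset p n).card := by
    rw [h2a, h2b, Finset.card_filter_add_card_filter_not, hicc, S2_eq hp hn,
      ← card_U_eq_card_D hp hn]
  have h3a : stu = (icc.filter (fun j => ent p j = n ∧ ent p (j + 1) = n + 1)).filter P1 := by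
    rw [htu_set, Finset.filter_filter]
    apply Finset.filter_congr
    intro j hj
    simp only [hP1]
    tauto
  have h3b : svl = (icc.filter (fun j => ent p j = n ∧ ent p (j + 1) = n + 1)).filter
      (fun j => ¬ P1 j) := by
    rw [hsvl, hfib, Finset.filter_filter, Finset.filter_filter, Finset.filter_filter]
    apply Finset.filter_congr
    intro j hj
    have hm := hmem j hj
    simp only [hP0, hP1, hP2]
    constructor
    · rintro ⟨h0, h1, h2⟩
      exact ⟨⟨h0, by omega⟩, h1⟩
    · rintro ⟨⟨h0, h2⟩, h1⟩
      exact ⟨h0, h1, by omega⟩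
  have hsplit3 : stu.card + svl.card = (Uset p (n + 1)).card := by
    rw [h3a, h3b, Finset.card_filter_add_card_filter_not, hicc, S3_eq hp hn]
  -- assemble
  have hβu0 : (Bset p n).card ≤ (Uset p n).card := by omega
  have hβu1 : (Bset p n).card ≤ (Uset p (n + 1)).card := by omega
  calc ∏ j ∈ fib, wstep R p j
      = (∏ j ∈ fib.filter P1, wstep R p j) *
        ∏ j ∈ fib.filter (fun j => ¬ P1 j), wstep R p j :=
        (Finset.prod_filter_mul_prod_filter_not fib P1 _).symm
    _ = ((∏ j ∈ spk, wstep R p j) * ∏ j ∈ stu, wstep R p j) *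
        ((∏ j ∈ std, wstep R p j) * ∏ j ∈ svl, wstep R p j) := by
        rw [← Finset.prod_filter_mul_prod_filter_not (fib.filter P1) P2,
          ← Finset.prod_filter_mul_prod_filter_not (fib.filter fun j => ¬ P1 j) P2]
    _ = (R n ^ spk.card * Real.sqrt (1 - R n ^ 2) ^ stu.card) *
        (Real.sqrt (1 - R n ^ 2) ^ std.card * (-R n) ^ svl.card) := by
        rw [Finset.prod_congr rfl hv1, Finset.prod_congr rfl hv2,
          Finset.prod_congr rfl hv3, Finset.prod_congr rfl hv4,
          Finset.prod_const, Finset.prod_const, Finset.prod_const, Finset.prod_const]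
    _ = R n ^ ((Uset p n).card - (Bset p n).card) *
        (-R n) ^ ((Uset p (n + 1)).card - (Bset p n).card) *
        Real.sqrt (1 - R n ^ 2) ^ (2 * (Bset p n).card) := by
        have e1 : spk.card = (Uset p n).card - (Bset p n).card := by omega
        have e2 : stu.card = (Bset p n).card := htu
        have e3 : std.card = (Bset p n).card := by omega
        have e4 : svl.card = (Uset p (n + 1)).card - (Bset p n).card := by omega
        rw [e1, e2, e3, e4]
        ring

end Helpers

/-- Lemma 1 of the paper: for a scattering sequence `p` with `κ(p) = k` and
`β(p) = b`, the weight is `w(p) = (-R)^(k̃-b) · R^(k-b) · T^(2b)`. -/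
theorem weight_eq (M : ℕ) (hM : 1 ≤ M) (R : ℤ → ℝ)
    (hR : ∀ j : Fin (M + 1), -1 < R ((j : ℕ) : ℤ) ∧ R ((j : ℕ) : ℤ) < 1)
    (p : List ℤ) (hp : IsScat M p) (k b : Fin (M + 1) → ℕ)
    (hk : kappa M p = k) (hb : beta M p = b) :
    weight R p =
      ∏ n : Fin (M + 1),
        (-R ((n : ℕ) : ℤ)) ^ (ktilde M k n - b n) * R ((n : ℕ) : ℤ) ^ (k n - b n) *
          Real.sqrt (1 - R ((n : ℕ) : ℤ) ^ 2) ^ (2 * b n) := by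
  classical
  subst hk
  subst hb
  have hL3 := hp.1
  set g : ℕ → Fin (M + 1) := fun j => ⟨min (ent p j).toNat M, by omega⟩ with hg
  have hA := Finset.prod_fiberwise_of_maps_to
    (s := Finset.Icc 1 (p.length - 2)) (t := (Finset.univ : Finset (Fin (M + 1))))
    (g := g) (fun j _ => Finset.mem_univ _) (wstep R p)
  unfold weight
  rw [← hA]
  apply Finset.prod_congr rfl
  intro n _
  have hnlt := n.is_lt
  have hfil : (Finset.Icc 1 (p.length - 2)).filter (fun j => g j = n)
      = (Finset.Icc 1 (p.length - 2)).filter (fun j => ent p j = ((n : ℕ) : ℤ)) := by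
    apply Finset.filter_congr
    intro j hj
    rw [Finset.mem_Icc] at hj
    have hbd := hp.2.2.2.1 j hj.1 hj.2
    constructor
    · intro h
      have h2 := congrArg Fin.val h
      simp only [hg] at h2
      omega
    · intro h
      apply Fin.ext
      simp only [hg]
      omega
  rw [hfil, fiber_prod hp R (by positivity)]
  have hk0 : kappa M p n = (Uset p ((n : ℕ) : ℤ)).card := kappa_eq_card hp n
  have hb0 : beta M p n = (Bset p ((n : ℕ) : ℤ)).card := beta_eq_card hp n
  have hkt : ktilde M (kappa M p) n = (Uset p (((n : ℕ) : ℤ) + 1)).card := by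
    rw [ktilde]
    split_ifs with h
    · rw [kappa_eq_card hp ⟨(n : ℕ) + 1, h⟩]
      have hc : ((((n : ℕ) + 1 : ℕ)) : ℤ) = ((n : ℕ) : ℤ) + 1 := by push_cast; ring
      rw [show ((⟨(n : ℕ) + 1, h⟩ : Fin (M + 1)) : ℕ) = (n : ℕ) + 1 from rfl, hc]
    · have hnM : ((n : ℕ) : ℤ) + 1 = (M : ℤ) + 1 := by
        have : (n : ℕ) = M := by omega
        rw [this]
      rw [hnM, Uset_top hp]
      simp
  rw [hk0, hb0, hkt]
  ring
end

section
/- Let M ≥ 1 be an integer, let R = (R_0, …, R_M) with −1 < R_j < 1 for all j, and let p ∈ S′_M be a transmission scattering sequence with κ′(p) = k and β′(p) = m. Then the weight of p satisfies w(p) = (−R)^{k̃−m} · R^{k−m} · T^{2m+𝟙}, where k̃ = (k_1, …, k_M, 0), 𝟙 = (1, …, 1), and powers of vectors are taken entrywise with the resulting products over the coordinates 0, …, M. -/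
/-- A transmission scattering sequence for an `M`-layer medium: a sequence
`(p_0, ..., p_L)` with `p_0 = -1`, `p_L = M + 1`, `p_i ∈ {0, ..., M}` for
`1 ≤ i ≤ L - 1`, and `|p_{i+1} - p_i| = 1` for all `0 ≤ i ≤ L - 1`. -/
def IsTransScat (M : ℕ) (p : List ℤ) : Prop :=
  ent p 0 = -1 ∧ ent p (p.length - 1) = (M : ℤ) + 1 ∧
  (∀ i, 1 ≤ i → i ≤ p.length - 2 → 0 ≤ ent p i ∧ ent p i ≤ (M : ℤ)) ∧
  (∀ i, i < p.length - 1 → |ent p (i + 1) - ent p i| = 1)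

/-- The transmission transit count vector `κ'(p)`: `k_n` is the number of
excursions of `p` to depth `n` other than the trunk block (the excursion
containing the final index `L`). -/
noncomputable def kappaT (M : ℕ) (p : List ℤ) : Fin (M + 1) → ℕ :=
  fun n => {ac ∈ excSet p ((n : ℕ) : ℤ) | ac.2 ≠ p.length - 1}.ncard

/-- The transmission branch count vector `β'(p)`: `m_n` is the number of
excursions of `p` to depth `n`, other than the trunk block, that contain some
index `i` with `p_i ≥ n + 1`. -/
noncomputable def betaT (M : ℕ) (p : List ℤ) : Fin (M + 1) → ℕ :=
  fun n => {ac ∈ excSet p ((n : ℕ) : ℤ) | ac.2 ≠ p.length - 1 ∧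
    ∃ i, ac.1 ≤ i ∧ i ≤ ac.2 ∧ ((n : ℕ) : ℤ) + 1 ≤ ent p i}.ncard

namespace TWaux

variable (p : List ℤ)

/-- interior index set -/
def intr : Finset ℕ := Finset.Icc 1 (p.length - 2)

def En (n : ℤ) : Finset ℕ :=
  (intr p).filter (fun i => ent p i = n ∧ ent p (i+1) = n - 1)
def Dn (n : ℤ) : Finset ℕ :=
  (intr p).filter (fun i => ent p i = n ∧ ent p (i+1) = n - 1 ∧ ent p (i-1) = n + 1)
def An (n : ℤ) : Finset ℕ :=
  (intr p).filter (fun i => ent p i = n ∧ ent p (i+1) = n - 1 ∧ ent p (i-1) = n - 1)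
def Bn (n : ℤ) : Finset ℕ :=
  (intr p).filter (fun i => ent p i = n ∧ ent p (i+1) = n + 1 ∧ ent p (i-1) = n + 1)
def Un (n : ℤ) : Finset ℕ :=
  (intr p).filter (fun i => ent p i = n ∧ ent p (i+1) = n + 1 ∧ ent p (i-1) = n - 1)
def SnS (n : ℤ) : Finset ℕ :=
  (intr p).filter (fun i => ent p i = n ∧ ent p (i-1) = n - 1)

variable {M : ℕ} {p : List ℤ}

lemma len2 (hp : IsTransScat M p) : 2 ≤ p.length := by
  obtain ⟨h0, hL, -, -⟩ := hp
  by_contra h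
  interval_cases hl : p.length
  · have : p = [] := List.length_eq_zero_iff.mp hl
    subst this; simp [ent] at h0
  · rw [show (1:ℕ)-1 = 0 from rfl, h0] at hL; omega

lemma step' (hp : IsTransScat M p) {i : ℕ} (hi : i < p.length - 1) :
    ent p (i+1) = ent p i + 1 ∨ ent p (i+1) = ent p i - 1 := by
  have := hp.2.2.2 i hi
  rcases (abs_eq (by norm_num : (0:ℤ) ≤ 1)).mp this with h | h
  · left; omega
  · right; omega

lemma stepl (hp : IsTransScat M p) {i : ℕ} (hi1 : 1 ≤ i) (hi : i - 1 < p.length - 1) :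
    ent p (i-1) = ent p i + 1 ∨ ent p (i-1) = ent p i - 1 := by
  have := step' hp hi
  rcases this with h | h <;> rw [show i - 1 + 1 = i from by omega] at h <;> omega

end TWaux
namespace TWaux
variable {M : ℕ} {p : List ℤ}

lemma exc_mem {n : ℤ} {a c : ℕ} :
    (a, c) ∈ excSet p n ↔ (a ≤ c ∧ c ≤ p.length - 1 ∧
      (∀ i, a ≤ i → i ≤ c → n ≤ ent p i) ∧
      (a = 0 ∨ ent p (a - 1) < n) ∧
      (c = p.length - 1 ∨ ent p (c + 1) < n)) := Iff.rfl

lemma exc_left (hp : IsTransScat M p) {n : ℤ} (hn : 0 ≤ n) {a c : ℕ}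
    (h : (a, c) ∈ excSet p n) : 1 ≤ a ∧ ent p (a - 1) < n := by
  obtain ⟨hac, hcl, hint, hl, -⟩ := exc_mem.mp h
  have ha : a ≠ 0 := by
    intro h0
    have := hint 0 (by omega) (by omega)
    rw [hp.1] at this; omega
  rcases hl with h0 | h0
  · exact absurd h0 ha
  · exact ⟨by omega, h0⟩

lemma exc_inj_snd (hp : IsTransScat M p) {n : ℤ} (hn : 0 ≤ n) {a a' c : ℕ}
    (h : (a, c) ∈ excSet p n) (h' : (a', c) ∈ excSet p n) : a = a' := by
  obtain ⟨hac, hcl, hint, hl, -⟩ := exc_mem.mp h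
  obtain ⟨hac', hcl', hint', hl', -⟩ := exc_mem.mp h'
  have h1 := (exc_left hp hn h).2
  have h1l := (exc_left hp hn h).1
  have h2 := (exc_left hp hn h').2
  have h2l := (exc_left hp hn h').1
  by_contra hne
  rcases Nat.lt_or_ge a a' with hlt | hge
  · have := hint (a' - 1) (by omega) (by omega); omega
  · have := hint' (a - 1) (by omega) (by omega); omega

lemma exc_inj_fst (hp : IsTransScat M p) {n : ℤ} {a c c' : ℕ}
    (h : (a, c) ∈ excSet p n) (h' : (a, c') ∈ excSet p n) : c = c' := by
  obtain ⟨hac, hcl, hint, -, hr⟩ := exc_mem.mp h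
  obtain ⟨hac', hcl', hint', -, hr'⟩ := exc_mem.mp h'
  by_contra hne
  rcases Nat.lt_or_ge c c' with hlt | hge
  · rcases hr with h0 | h0
    · omega
    · have := hint' (c + 1) (by omega) (by omega); omega
  · rcases hr' with h0 | h0
    · omega
    · have := hint (c' + 1) (by omega) (by omega); omega

lemma find_start (hp : IsTransScat M p) {n : ℤ} {i : ℕ} (hn : 0 ≤ n)
    (hi : n ≤ ent p i) :
    ∃ a, a ≤ i ∧ (∀ j, a ≤ j → j ≤ i → n ≤ ent p j) ∧ 1 ≤ a ∧
      ent p (a - 1) < n ∧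
      ∀ b, (∀ j, b ≤ j → j ≤ i → n ≤ ent p j) → a ≤ b := by
  classical
  have hex : ∃ a, ∀ j, a ≤ j → j ≤ i → n ≤ ent p j :=
    ⟨i, fun j h1 h2 => by rwa [le_antisymm h2 h1]⟩
  set a := Nat.find hex with ha
  have hPa := Nat.find_spec hex
  have hmin : ∀ b, (∀ j, b ≤ j → j ≤ i → n ≤ ent p j) → a ≤ b :=
    fun b hb => Nat.find_min' hex hb
  have hai : a ≤ i := hmin i (fun j h1 h2 => by rwa [le_antisymm h2 h1])
  have ha1 : 1 ≤ a := by
    by_contra h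
    have := hPa 0 (by omega) (by omega)
    rw [hp.1] at this; omega
  have hfail : ¬ ∀ j, a - 1 ≤ j → j ≤ i → n ≤ ent p j := Nat.find_min hex (by omega)
  push_neg at hfail
  obtain ⟨j, hj1, hj2, hj3⟩ := hfail
  have hje : j = a - 1 := by
    by_contra hne
    exact absurd (hPa j (by omega) hj2) (by omega)
  exact ⟨a, hai, hPa, ha1, by rw [← hje]; omega, hmin⟩

lemma find_end (hp : IsTransScat M p) {n : ℤ} {i : ℕ} (hi : n ≤ ent p i)
    (hil : i ≤ p.length - 1) :
    ∃ c, i ≤ c ∧ c ≤ p.length - 1 ∧ (∀ j, i ≤ j → j ≤ c → n ≤ ent p j) ∧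
      (c = p.length - 1 ∨ ent p (c + 1) < n) := by
  classical
  have hex : ∃ t, i + t = p.length - 1 ∨ ent p (i + t + 1) < n :=
    ⟨p.length - 1 - i, Or.inl (by omega)⟩
  set t0 := Nat.find hex with ht0
  have hspec := Nat.find_spec hex
  have htle : t0 ≤ p.length - 1 - i := Nat.find_min' hex (Or.inl (by omega))
  have hkey : ∀ s, s ≤ t0 → n ≤ ent p (i + s) := by
    intro s
    induction s with
    | zero => intro _; simpa using hi
    | succ s ih =>
      intro hs
      have hns : ¬ (i + s = p.length - 1 ∨ ent p (i + s + 1) < n) :=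
        Nat.find_min hex (by omega)
      push_neg at hns
      have h2 := hns.2
      rw [show i + (s + 1) = i + s + 1 by omega]
      exact h2
  refine ⟨i + t0, by omega, by omega, ?_, hspec⟩
  intro j h1 h2
  have := hkey (j - i) (by omega)
  rwa [show i + (j - i) = j from by omega] at this

end TWaux
namespace TWaux
variable {M : ℕ} {p : List ℤ}

lemma mem_intr {i : ℕ} : i ∈ intr p ↔ 1 ≤ i ∧ i ≤ p.length - 2 := Finset.mem_Icc

lemma kappa_card (hp : IsTransScat M p) {n : ℤ} (hn0 : 0 ≤ n) (hnM : n ≤ (M:ℤ)) :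
    {ac ∈ excSet p n | ac.2 ≠ p.length - 1}.ncard = (En p n).card := by
  have hlen := len2 hp
  have himg : Prod.snd '' {ac ∈ excSet p n | ac.2 ≠ p.length - 1} = ↑(En p n) := by
    ext c
    simp only [Set.mem_image, Set.mem_setOf_eq, Finset.mem_coe, En, intr,
      Finset.mem_filter, Finset.mem_Icc]
    constructor
    · rintro ⟨⟨a, c'⟩, ⟨hmem, hne⟩, rfl⟩
      obtain ⟨hac, hcl, hint, hl, hr⟩ := exc_mem.mp hmem
      obtain ⟨ha1, hal⟩ := exc_left hp hn0 hmem
      simp only at hne ⊢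
      have hcr : ent p (c' + 1) < n := hr.resolve_left hne
      have hc := hint c' hac le_rfl
      have hstep := step' hp (show c' < p.length - 1 by omega)
      refine ⟨⟨by omega, by omega⟩, by omega, by omega⟩
    · rintro ⟨⟨hc1, hc2⟩, hcn, hcn1⟩
      obtain ⟨a, hai, hint, ha1, hal, hamin⟩ := find_start hp hn0 (le_of_eq hcn.symm)
      exact ⟨(a, c), ⟨exc_mem.mpr ⟨hai, by omega, hint, Or.inr hal, Or.inr (by omega)⟩,
        by simp only; omega⟩, rfl⟩
  have hinj : Set.InjOn Prod.snd {ac ∈ excSet p n | ac.2 ≠ p.length - 1} := by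
    rintro ⟨a, c⟩ hx ⟨a', c'⟩ hy hxy
    simp only at hxy
    subst hxy
    have := exc_inj_snd hp hn0 hx.1 hy.1
    simp [this]
  rw [← Set.ncard_coe_finset (En p n), ← himg, Set.ncard_image_of_injOn hinj]

lemma beta_card (hp : IsTransScat M p) {n : ℤ} (hn0 : 0 ≤ n) (hnM : n ≤ (M:ℤ)) :
    {ac ∈ excSet p n | ac.2 ≠ p.length - 1 ∧
      ∃ i, ac.1 ≤ i ∧ i ≤ ac.2 ∧ n + 1 ≤ ent p i}.ncard = (Dn p n).card := by
  have hlen := len2 hp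
  have himg : Prod.snd '' {ac ∈ excSet p n | ac.2 ≠ p.length - 1 ∧
      ∃ i, ac.1 ≤ i ∧ i ≤ ac.2 ∧ n + 1 ≤ ent p i} = ↑(Dn p n) := by
    ext c
    simp only [Set.mem_image, Set.mem_setOf_eq, Finset.mem_coe, Dn, intr,
      Finset.mem_filter, Finset.mem_Icc]
    constructor
    · rintro ⟨⟨a, c'⟩, ⟨hmem, hne, j, hj1, hj2, hjv⟩, rfl⟩
      obtain ⟨hac, hcl, hint, hl, hr⟩ := exc_mem.mp hmem
      obtain ⟨ha1, hal⟩ := exc_left hp hn0 hmem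
      simp only at hne hj1 hj2 ⊢
      have hcr : ent p (c' + 1) < n := hr.resolve_left hne
      have hc := hint c' hac le_rfl
      have hstep := step' hp (show c' < p.length - 1 by omega)
      have hcn : ent p c' = n := by omega
      have hjc : j ≠ c' := by intro h; rw [h, hcn] at hjv; omega
      have hac' : a < c' := by omega
      have hprev := hint (c' - 1) (by omega) (by omega)
      have hstepl := stepl hp (show 1 ≤ c' by omega) (show c' - 1 < p.length - 1 by omega)
      refine ⟨⟨by omega, by omega⟩, by omega, by omega, by omega⟩
    · rintro ⟨⟨hc1, hc2⟩, hcn, hcn1, hcm1⟩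
      obtain ⟨a, hai, hint, ha1, hal, hamin⟩ := find_start hp hn0 (le_of_eq hcn.symm)
      have hacm : a ≤ c - 1 := by
        apply hamin
        intro j hj1 hj2
        have : j = c - 1 ∨ j = c := by omega
        rcases this with h | h <;> rw [h] <;> omega
      refine ⟨(a, c), ⟨exc_mem.mpr ⟨hai, by omega, hint, Or.inr hal, Or.inr (by omega)⟩,
        by simp only; omega, c - 1, by simp only; omega, by simp only; omega, by omega⟩, rfl⟩
  have hinj : Set.InjOn Prod.snd {ac ∈ excSet p n | ac.2 ≠ p.length - 1 ∧
      ∃ i, ac.1 ≤ i ∧ i ≤ ac.2 ∧ n + 1 ≤ ent p i} := by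
    rintro ⟨a, c⟩ hx ⟨a', c'⟩ hy hxy
    simp only at hxy
    subst hxy
    have := exc_inj_snd hp hn0 hx.1 hy.1
    simp [this]
  rw [← Set.ncard_coe_finset (Dn p n), ← himg, Set.ncard_image_of_injOn hinj]

lemma full_card (hp : IsTransScat M p) {n : ℤ} (hn0 : 0 ≤ n) (hnM : n ≤ (M:ℤ)) :
    (excSet p n).ncard = (SnS p n).card := by
  have hlen := len2 hp
  have hL := hp.2.1
  have himg : Prod.fst '' excSet p n = ↑(SnS p n) := by
    ext a
    simp only [Set.mem_image, Finset.mem_coe, SnS, intr,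
      Finset.mem_filter, Finset.mem_Icc]
    constructor
    · rintro ⟨⟨a', c⟩, hmem, rfl⟩
      obtain ⟨hac, hcl, hint, hl, hr⟩ := exc_mem.mp hmem
      obtain ⟨ha1, hal⟩ := exc_left hp hn0 hmem
      dsimp only
      have ha := hint a' le_rfl hac
      have hstepl := stepl hp ha1 (show a' - 1 < p.length - 1 by omega)
      have han : ent p a' = n := by omega
      have hane : a' ≠ p.length - 1 := by
        intro h; rw [h, hL] at han; omega
      refine ⟨⟨by omega, by omega⟩, by omega, by omega⟩
    · rintro ⟨⟨ha1, ha2⟩, han, han1⟩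
      obtain ⟨c, hic, hcl, hint, hr⟩ := find_end hp (le_of_eq han.symm) (by omega)
      exact ⟨(a, c), exc_mem.mpr ⟨hic, hcl, hint, Or.inr (by omega), hr⟩, rfl⟩
  have hinj : Set.InjOn Prod.fst (excSet p n) := by
    rintro ⟨a, c⟩ hx ⟨a', c'⟩ hy hxy
    simp only at hxy
    subst hxy
    have := exc_inj_fst hp hx hy
    simp [this]
  rw [← Set.ncard_coe_finset (SnS p n), ← himg, Set.ncard_image_of_injOn hinj]

lemma exc_finite (n : ℤ) : (excSet p n).Finite := by
  apply Set.Finite.subset ((Set.finite_Iic (p.length - 1)).prod (Set.finite_Iic (p.length - 1)))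
  rintro ⟨a, c⟩ hmem
  obtain ⟨hac, hcl, -, -, -⟩ := exc_mem.mp hmem
  exact ⟨by simpa using by omega, by simpa using hcl⟩

lemma exc_split (hp : IsTransScat M p) {n : ℤ} (hn0 : 0 ≤ n) (hnM : n ≤ (M:ℤ)) :
    (excSet p n).ncard = {ac ∈ excSet p n | ac.2 ≠ p.length - 1}.ncard + 1 := by
  have hlen := len2 hp
  have hL := hp.2.1
  -- the trunk
  have hend : n ≤ ent p (p.length - 1) := by rw [hL]; omega
  obtain ⟨a0, hai, hint, ha1, hal, hamin⟩ := find_start hp hn0 hend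
  have htrunk : {ac ∈ excSet p n | ac.2 = p.length - 1} = {(a0, p.length - 1)} := by
    ext ⟨a, c⟩
    simp only [Set.mem_setOf_eq, Set.mem_singleton_iff, Prod.mk.injEq]
    constructor
    · rintro ⟨hmem, hc⟩
      subst hc
      have hmem0 : (a0, p.length - 1) ∈ excSet p n :=
        exc_mem.mpr ⟨hai, le_rfl, hint, Or.inr hal, Or.inl rfl⟩
      exact ⟨exc_inj_snd hp hn0 hmem hmem0, rfl⟩
    · rintro ⟨rfl, rfl⟩
      exact ⟨exc_mem.mpr ⟨hai, le_rfl, hint, Or.inr hal, Or.inl rfl⟩, rfl⟩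
  have hsplit : excSet p n = {ac ∈ excSet p n | ac.2 ≠ p.length - 1} ∪
      {ac ∈ excSet p n | ac.2 = p.length - 1} := by
    ext ac
    by_cases h : ac.2 = p.length - 1 <;> simp [Set.mem_setOf_eq, h] <;> tauto
  nth_rewrite 1 [hsplit]
  rw [Set.ncard_union_eq ?disj ((exc_finite n).subset (fun x hx => hx.1))
    ((exc_finite n).subset (fun x hx => hx.1)), htrunk, Set.ncard_singleton]
  case disj =>
    apply Set.disjoint_left.mpr
    rintro ac ⟨-, h1⟩ ⟨-, h2⟩
    exact h1 h2

end TWaux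
namespace TWaux
variable {M : ℕ} {p : List ℤ}

lemma interior_step (hp : IsTransScat M p) {i : ℕ} (h1 : 1 ≤ i) (h2 : i ≤ p.length - 2) :
    (ent p (i-1) = ent p i + 1 ∨ ent p (i-1) = ent p i - 1) ∧
    (ent p (i+1) = ent p i + 1 ∨ ent p (i+1) = ent p i - 1) := by
  have hlen := len2 hp
  exact ⟨stepl hp h1 (by omega), step' hp (by omega)⟩

lemma En_eq_union (hp : IsTransScat M p) (n : ℤ) :
    En p n = An p n ∪ Dn p n := by
  ext i
  simp only [En, An, Dn, Finset.mem_union, Finset.mem_filter, mem_intr]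
  constructor
  · rintro ⟨⟨h1, h2⟩, hn, hn1⟩
    have := (interior_step hp h1 h2).1
    rcases this with h | h
    · right; refine ⟨⟨h1, h2⟩, hn, hn1, by omega⟩
    · left; exact ⟨⟨h1, h2⟩, hn, hn1, by omega⟩
  · rintro (⟨h, hn, hn1, -⟩ | ⟨h, hn, hn1, -⟩) <;> exact ⟨h, hn, hn1⟩

lemma An_disj_Dn (n : ℤ) : Disjoint (An p n) (Dn p n) := by
  apply Finset.disjoint_left.mpr
  intro i hA hD
  simp only [An, Dn, Finset.mem_filter] at hA hD
  omega

lemma SnS_eq_union (hp : IsTransScat M p) (n : ℤ) :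
    SnS p n = An p n ∪ Un p n := by
  ext i
  simp only [SnS, An, Un, Finset.mem_union, Finset.mem_filter, mem_intr]
  constructor
  · rintro ⟨⟨h1, h2⟩, hn, hn1⟩
    have := (interior_step hp h1 h2).2
    rcases this with h | h
    · right; refine ⟨⟨h1, h2⟩, hn, by omega, hn1⟩
    · left; exact ⟨⟨h1, h2⟩, hn, by omega, hn1⟩
  · rintro (⟨h, hn, -, hn1⟩ | ⟨h, hn, -, hn1⟩) <;> exact ⟨h, hn, hn1⟩

lemma An_disj_Un (n : ℤ) : Disjoint (An p n) (Un p n) := by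
  apply Finset.disjoint_left.mpr
  intro i hA hD
  simp only [An, Un, Finset.mem_filter] at hA hD
  omega

lemma Bn_disj_Dn (n : ℤ) : Disjoint (Bn p n) (Dn p n) := by
  apply Finset.disjoint_left.mpr
  intro i hA hD
  simp only [Bn, Dn, Finset.mem_filter] at hA hD
  omega

lemma shift_eq (hp : IsTransScat M p) {n : ℤ} (hn0 : 0 ≤ n) (hnM : n + 1 ≤ (M:ℤ)) :
    (En p (n+1)).image (· + 1) = Bn p n ∪ Dn p n := by
  have hlen := len2 hp
  have hL := hp.2.1
  ext j
  simp only [En, Bn, Dn, Finset.mem_union, Finset.mem_image, Finset.mem_filter, mem_intr]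
  constructor
  · rintro ⟨i, ⟨⟨h1, h2⟩, hn, hn1⟩, rfl⟩
    have hj2 : i + 1 ≠ p.length - 1 := by
      intro h; rw [h, hL] at hn1; omega
    have hstep := step' hp (show i + 1 < p.length - 1 by omega)
    have hi : ent p (i + 1 - 1) = n + 1 := by
      rw [show i + 1 - 1 = i from by omega]; exact hn
    rcases hstep with h | h
    · left; refine ⟨⟨by omega, by omega⟩, by omega, by omega, by omega⟩
    · right; refine ⟨⟨by omega, by omega⟩, by omega, by omega, by omega⟩
  · rintro (⟨⟨h1, h2⟩, hn, hn1, hnm⟩ | ⟨⟨h1, h2⟩, hn, hn1, hnm⟩) <;>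
    · have hj1 : 2 ≤ j := by
        by_contra h
        have : j = 1 := by omega
        rw [this] at hnm
        rw [show (1:ℕ) - 1 = 0 from rfl, hp.1] at hnm
        omega
      refine ⟨j - 1, ⟨⟨by omega, by omega⟩, ?_, ?_⟩, by omega⟩
      · rwa [show j - 1 = j - 1 from rfl]; 
      · rw [show j - 1 + 1 = j from by omega, hn]; ring

lemma Bn_top (hp : IsTransScat M p) : Bn p (M:ℤ) = ∅ ∧ Dn p (M:ℤ) = ∅ := by
  have hlen := len2 hp
  constructor <;>
  · apply Finset.eq_empty_of_forall_notMem
    intro i hi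
    simp only [Bn, Dn, Finset.mem_filter, mem_intr] at hi
    obtain ⟨⟨h1, h2⟩, hn, hn1, hnm⟩ := hi
    rcases Nat.eq_or_lt_of_le h1 with h | h
    · rw [← h, show (1:ℕ) - 1 = 0 from rfl, hp.1] at hnm; omega
    · have := hp.2.2.1 (i - 1) (by omega) (by omega)
      omega

end TWaux
namespace TWaux
variable {M : ℕ} {p : List ℤ}

lemma kappaT_eq (hp : IsTransScat M p) (n : Fin (M + 1)) :
    kappaT M p n = (En p ((n : ℕ) : ℤ)).card :=
  kappa_card hp (Int.natCast_nonneg _) (by exact_mod_cast Fin.is_le n)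

lemma betaT_eq (hp : IsTransScat M p) (n : Fin (M + 1)) :
    betaT M p n = (Dn p ((n : ℕ) : ℤ)).card :=
  beta_card hp (Int.natCast_nonneg _) (by exact_mod_cast Fin.is_le n)

lemma SnS_card (hp : IsTransScat M p) (n : Fin (M + 1)) :
    (SnS p ((n : ℕ) : ℤ)).card = kappaT M p n + 1 := by
  rw [← full_card hp (Int.natCast_nonneg _) (by exact_mod_cast Fin.is_le n),
    exc_split hp (Int.natCast_nonneg _) (by exact_mod_cast Fin.is_le n)]
  rfl

lemma An_card (hp : IsTransScat M p) (n : Fin (M + 1)) :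
    (An p ((n : ℕ) : ℤ)).card = kappaT M p n - betaT M p n ∧
    betaT M p n ≤ kappaT M p n := by
  have h1 := kappaT_eq hp n
  have h2 := betaT_eq hp n
  have h3 : (En p ((n : ℕ) : ℤ)).card =
      (An p ((n : ℕ) : ℤ)).card + (Dn p ((n : ℕ) : ℤ)).card := by
    rw [En_eq_union hp, Finset.card_union_of_disjoint (An_disj_Dn _)]
  omega

lemma Un_card (hp : IsTransScat M p) (n : Fin (M + 1)) :
    (Un p ((n : ℕ) : ℤ)).card = betaT M p n + 1 := by
  have h1 := SnS_card hp n
  have h2 := (An_card hp n).1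
  have h3 := (An_card hp n).2
  have h4 : (SnS p ((n : ℕ) : ℤ)).card =
      (An p ((n : ℕ) : ℤ)).card + (Un p ((n : ℕ) : ℤ)).card := by
    rw [SnS_eq_union hp, Finset.card_union_of_disjoint (An_disj_Un _)]
  omega

lemma Bn_card (hp : IsTransScat M p) (n : Fin (M + 1)) :
    (Bn p ((n : ℕ) : ℤ)).card = ktilde M (kappaT M p) n - betaT M p n := by
  unfold ktilde
  by_cases h : (n : ℕ) + 1 < M + 1
  · rw [dif_pos h]
    have hsh := shift_eq hp (Int.natCast_nonneg (n : ℕ))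
      (show ((n : ℕ) : ℤ) + 1 ≤ (M : ℤ) by exact_mod_cast Nat.lt_succ_iff.mp h)
    have hknn := kappaT_eq hp ⟨(n : ℕ) + 1, h⟩
    have hcast : (((n : ℕ) + 1 : ℕ) : ℤ) = ((n : ℕ) : ℤ) + 1 := by push_cast; ring
    rw [hcast] at hknn
    have himg : ((En p (((n : ℕ) : ℤ) + 1)).image (· + 1)).card =
        (En p (((n : ℕ) : ℤ) + 1)).card :=
      Finset.card_image_of_injective _ (fun a b hab => by omega)
    have hcard : (Bn p ((n : ℕ) : ℤ)).card + (Dn p ((n : ℕ) : ℤ)).card =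
        (En p (((n : ℕ) : ℤ) + 1)).card := by
      rw [← himg, hsh, Finset.card_union_of_disjoint (Bn_disj_Dn _)]
    have hb := betaT_eq hp n
    omega
  · rw [dif_neg h]
    have hn : (n : ℕ) = M := by have := n.isLt; omega
    have htop := Bn_top (p := p) hp
    have hb := betaT_eq hp n
    rw [hn] at hb ⊢
    rw [htop.1]
    rw [htop.2] at hb
    simp only [Finset.card_empty] at hb ⊢
    omega

end TWaux
namespace TWaux
variable {M : ℕ} {p : List ℤ}

lemma Bn_disj_Un (n : ℤ) : Disjoint (Bn p n) (Un p n) := by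
  apply Finset.disjoint_left.mpr
  intro i hA hD
  simp only [Bn, Un, Finset.mem_filter] at hA hD
  omega

lemma An_disj_Bn (n : ℤ) : Disjoint (An p n) (Bn p n) := by
  apply Finset.disjoint_left.mpr
  intro i hA hD
  simp only [An, Bn, Finset.mem_filter] at hA hD
  omega

lemma Un_disj_Dn (n : ℤ) : Disjoint (Un p n) (Dn p n) := by
  apply Finset.disjoint_left.mpr
  intro i hA hD
  simp only [Un, Dn, Finset.mem_filter] at hA hD
  omega

lemma Fn_eq_union (hp : IsTransScat M p) (n : ℤ) :
    (intr p).filter (fun i => ent p i = n) =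
      (An p n ∪ Bn p n) ∪ (Un p n ∪ Dn p n) := by
  ext i
  simp only [An, Bn, Un, Dn, Finset.mem_union, Finset.mem_filter]
  constructor
  · rintro ⟨hi, hn⟩
    obtain ⟨h1, h2⟩ := interior_step hp (mem_intr.mp hi).1 (mem_intr.mp hi).2
    rcases h1 with ha | ha <;> rcases h2 with hb | hb
    · exact Or.inl (Or.inr ⟨hi, hn, by omega, by omega⟩)
    · exact Or.inr (Or.inr ⟨hi, hn, by omega, by omega⟩)
    · exact Or.inr (Or.inl ⟨hi, hn, by omega, by omega⟩)
    · exact Or.inl (Or.inl ⟨hi, hn, by omega, by omega⟩)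
  · rintro ((⟨hi, hn, -⟩ | ⟨hi, hn, -⟩) | (⟨hi, hn, -⟩ | ⟨hi, hn, -⟩)) <;> exact ⟨hi, hn⟩

lemma prod_An (R : ℤ → ℝ) (n : ℤ) :
    ∏ i ∈ An p n, wstep R p i = R n ^ (An p n).card := by
  rw [← Finset.prod_const]
  refine Finset.prod_congr rfl (fun i hi => ?_)
  simp only [An, Finset.mem_filter] at hi
  obtain ⟨-, h1, h2, h3⟩ := hi
  unfold wstep
  rw [if_pos ⟨by omega, by omega⟩, h1]

lemma prod_Bn (R : ℤ → ℝ) (n : ℤ) :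
    ∏ i ∈ Bn p n, wstep R p i = (-R n) ^ (Bn p n).card := by
  rw [← Finset.prod_const]
  refine Finset.prod_congr rfl (fun i hi => ?_)
  simp only [Bn, Finset.mem_filter] at hi
  obtain ⟨-, h1, h2, h3⟩ := hi
  unfold wstep
  rw [if_neg (by rintro ⟨ha, -⟩; omega), if_pos ⟨by omega, by omega⟩, h1]

lemma prod_Un (R : ℤ → ℝ) (n : ℤ) :
    ∏ i ∈ Un p n, wstep R p i = Real.sqrt (1 - R n ^ 2) ^ (Un p n).card := by
  rw [← Finset.prod_const]
  refine Finset.prod_congr rfl (fun i hi => ?_)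
  simp only [Un, Finset.mem_filter] at hi
  obtain ⟨-, h1, h2, h3⟩ := hi
  unfold wstep
  rw [if_neg (by rintro ⟨-, hb⟩; omega), if_neg (by rintro ⟨ha, -⟩; omega), h1]

lemma prod_Dn (R : ℤ → ℝ) (n : ℤ) :
    ∏ i ∈ Dn p n, wstep R p i = Real.sqrt (1 - R n ^ 2) ^ (Dn p n).card := by
  rw [← Finset.prod_const]
  refine Finset.prod_congr rfl (fun i hi => ?_)
  simp only [Dn, Finset.mem_filter] at hi
  obtain ⟨-, h1, h2, h3⟩ := hi
  unfold wstep
  rw [if_neg (by rintro ⟨ha, -⟩; omega), if_neg (by rintro ⟨-, hb⟩; omega), h1]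

lemma level_prod (hp : IsTransScat M p) (R : ℤ → ℝ) (n : Fin (M + 1)) :
    ∏ i ∈ (intr p).filter (fun i => ent p i = ((n : ℕ) : ℤ)), wstep R p i =
      (-R ((n : ℕ) : ℤ)) ^ (ktilde M (kappaT M p) n - betaT M p n) *
        R ((n : ℕ) : ℤ) ^ (kappaT M p n - betaT M p n) *
        Real.sqrt (1 - R ((n : ℕ) : ℤ) ^ 2) ^ (2 * betaT M p n + 1) := by
  rw [Fn_eq_union hp,
    Finset.prod_union (Finset.disjoint_union_right.mpr
      ⟨Finset.disjoint_union_left.mpr ⟨An_disj_Un _, Bn_disj_Un _⟩,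
       Finset.disjoint_union_left.mpr ⟨An_disj_Dn _, Bn_disj_Dn _⟩⟩),
    Finset.prod_union (An_disj_Bn _), Finset.prod_union (Un_disj_Dn _),
    prod_An, prod_Bn, prod_Un, prod_Dn,
    (An_card hp n).1, Bn_card hp n, Un_card hp n, ← betaT_eq hp n]
  ring

end TWaux
open TWaux

/-- Lemma 3 of the paper: for a transmission scattering sequence `p` with
`κ'(p) = k` and `β'(p) = m`, the weight is
`w(p) = (-R)^(k̃-m) · R^(k-m) · T^(2m+𝟙)`. -/
theorem trans_weight_eq (M : ℕ) (hM : 1 ≤ M) (R : ℤ → ℝ)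
    (hR : ∀ j : Fin (M + 1), -1 < R ((j : ℕ) : ℤ) ∧ R ((j : ℕ) : ℤ) < 1)
    (p : List ℤ) (hp : IsTransScat M p) (k m : Fin (M + 1) → ℕ)
    (hk : kappaT M p = k) (hm : betaT M p = m) :
    weight R p =
      ∏ n : Fin (M + 1),
        (-R ((n : ℕ) : ℤ)) ^ (ktilde M k n - m n) * R ((n : ℕ) : ℤ) ^ (k n - m n) *
          Real.sqrt (1 - R ((n : ℕ) : ℤ) ^ 2) ^ (2 * m n + 1) := by
  subst hk hm
  have hdisj : (↑(Finset.univ : Finset (Fin (M + 1))) : Set (Fin (M + 1))).PairwiseDisjoint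
      (fun n : Fin (M + 1) => (intr p).filter (fun i => ent p i = ((n : ℕ) : ℤ))) := by
    intro x _ y _ hxy
    apply Finset.disjoint_left.mpr
    intro i hi hi'
    simp only [Finset.mem_filter] at hi hi'
    exact hxy (Fin.ext (by omega))
  have hpart : intr p = Finset.univ.biUnion (fun n : Fin (M + 1) =>
      (intr p).filter (fun i => ent p i = ((n : ℕ) : ℤ))) := by
    ext i
    simp only [Finset.mem_biUnion, Finset.mem_univ, true_and, Finset.mem_filter]
    constructor
    · intro hi
      have hb := hp.2.2.1 i (mem_intr.mp hi).1 (mem_intr.mp hi).2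
      exact ⟨⟨(ent p i).toNat, by omega⟩, hi, by simp only [Fin.val_mk]; omega⟩
    · rintro ⟨n, hi, -⟩; exact hi
  have hw : weight R p = ∏ i ∈ intr p, wstep R p i := rfl
  rw [hw, hpart, Finset.prod_biUnion hdisj]
  exact Finset.prod_congr rfl (fun n _ => level_prod hp R n)
end
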